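/- arXiv:math/0011121 — 11 statements merged into one kernel-verified Lean document; each statement's English description precedes it below -/
import Mathlib

section
/- The functor from the category of schemes to the category of functors CommRing → Type, sending a scheme X to the functor R ↦ Hom_{Sch}(Spec R, X) (and a morphism of schemes to the induced natural transformation given by composition), is fully faithful. -/
open CategoryTheory AlgebraicGeometry

universe u

/-- The functor of points: a scheme `X` is sent to the functor
`R ↦ Hom_Sch(Spec R, X)` on commutative rings. -/
noncomputable def schemeToFunctorOfPoints :
    Scheme.{u} ⥤ (CommRingCat.{u} ⥤ Type u) where
  obj X :=
    { obj := fun R => Spec R ⟶ X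
      map := fun f => TypeCat.ofHom fun g => Spec.map f ≫ g
      map_id := fun R => by ext g; simp
      map_comp := fun f g => by
        ext h
        simp [Spec.map_comp, Category.assoc] }
  map f :=
    { app := fun R => TypeCat.ofHom fun g => g ≫ f
      naturality := fun R S φ => by ext g; simp }
  map_id X := by
    apply NatTrans.ext
    ext R g
    simp
  map_comp f g := by
    apply NatTrans.ext
    ext R h
    simp


open CategoryTheory.Limits

/-- Morphisms of schemes are determined by their compositions with all maps from affine
schemes. -/
lemma hom_ext_of_points {X Y : Scheme.{u}} {f g : X ⟶ Y}
    (h : ∀ (R : CommRingCat.{u}) (φ : Spec R ⟶ X), φ ≫ f = φ ≫ g) : f = g := by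
  apply X.affineCover.hom_ext
  intro i
  exact h _ (X.affineCover.f i)

/-- Generalized naturality: a natural transformation between functors of points commutes with
precomposition by arbitrary morphisms of affine schemes. -/
lemma app_comp_of_points {X Y : Scheme.{u}}
    (α : schemeToFunctorOfPoints.{u}.obj X ⟶ schemeToFunctorOfPoints.{u}.obj Y)
    {R S : CommRingCat.{u}} (h : Spec S ⟶ Spec R) (g : Spec R ⟶ X) :
    α.app S (h ≫ g) = h ≫ α.app R g := by
  obtain ⟨φ, rfl⟩ := (Scheme.Spec).map_surjective
    (show Scheme.Spec.obj (Opposite.op S) ⟶ Scheme.Spec.obj (Opposite.op R) from h)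
  exact ConcreteCategory.congr_hom (α.naturality φ.unop) g

/-- The functor of points embedding of schemes into functors `CommRing ⥤ Type` is
fully faithful. -/
theorem schemeToFunctorOfPoints_full_and_faithful :
    schemeToFunctorOfPoints.{u}.Full ∧ schemeToFunctorOfPoints.{u}.Faithful := by
  constructor
  · constructor
    intro X Y α
    -- glue the morphisms `α.app _ (𝒰.f i)` along the affine cover `𝒰` of `X`.
    set 𝒰 := X.affineCover with h𝒰
    have compat : ∀ i j, pullback.fst (𝒰.f i) (𝒰.f j) ≫ α.app _ (𝒰.f i) =
        pullback.snd (𝒰.f i) (𝒰.f j) ≫ α.app _ (𝒰.f j) := by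
      intro i j
      apply hom_ext_of_points
      intro R φ
      have e1 := app_comp_of_points α (φ ≫ pullback.fst (𝒰.f i) (𝒰.f j)) (𝒰.f i)
      have e2 := app_comp_of_points α (φ ≫ pullback.snd (𝒰.f i) (𝒰.f j)) (𝒰.f j)
      have e3 : (φ ≫ pullback.fst (𝒰.f i) (𝒰.f j)) ≫ 𝒰.f i =
          (φ ≫ pullback.snd (𝒰.f i) (𝒰.f j)) ≫ 𝒰.f j := by
        simp only [Category.assoc, pullback.condition]
      exact (Category.assoc _ _ _).symm.trans (e1.symm.trans
        ((congrArg (fun x => α.app R x) e3).trans (e2.trans (Category.assoc _ _ _))))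
    refine ⟨𝒰.glueMorphisms (fun i => α.app _ (𝒰.f i)) compat, ?_⟩
    apply NatTrans.ext
    funext R
    ext (g : Spec R ⟶ X)
    show g ≫ 𝒰.glueMorphisms _ _ = α.app R g
    -- check the equality after pulling back along the cover and refining to affines
    apply ((𝒰.pullback₁ g).bind (fun i => Scheme.affineCover _)).hom_ext
    rintro ⟨(i : 𝒰.I₀), (k : (pullback g (𝒰.f i)).affineCover.I₀)⟩
    have hmap : ((𝒰.pullback₁ g).bind (fun i => Scheme.affineCover _)).f ⟨i, k⟩ =
        (pullback g (𝒰.f i)).affineCover.f k ≫ pullback.fst g (𝒰.f i) := rfl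
    rw [hmap]
    set ψ := (pullback g (𝒰.f i)).affineCover.f k with hψ
    have key : (ψ ≫ pullback.fst g (𝒰.f i)) ≫ g =
        (ψ ≫ pullback.snd g (𝒰.f i)) ≫ 𝒰.f i := by
      simp only [Category.assoc, pullback.condition]
    calc (ψ ≫ pullback.fst g (𝒰.f i)) ≫ g ≫ 𝒰.glueMorphisms _ compat
        = ((ψ ≫ pullback.snd g (𝒰.f i)) ≫ 𝒰.f i) ≫ 𝒰.glueMorphisms _ compat := by
          rw [← Category.assoc, key]
      _ = (ψ ≫ pullback.snd g (𝒰.f i)) ≫ α.app _ (𝒰.f i) := by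
          rw [Category.assoc]
          exact congrArg (fun t => (ψ ≫ pullback.snd g (𝒰.f i)) ≫ t) (𝒰.ι_glueMorphisms _ compat i)
      _ = (ψ ≫ pullback.fst g (𝒰.f i)) ≫ α.app R g :=
          (app_comp_of_points α _ _).symm.trans
            ((congrArg (fun x => α.app _ x) key.symm).trans (app_comp_of_points α _ _))
  · constructor
    intro X Y f g h
    apply hom_ext_of_points
    intro R φ
    exact ConcreteCategory.congr_hom (congrArg (fun β => NatTrans.app β R) h) φ
end

section
/- Let G be a finite group acting by ring automorphisms on a commutative ring S, and let R = S^G be the subring of G-fixed elements. Then (1) the map Spec S → Spec R sending a prime ideal q of S to q ∩ R is surjective, and (2) G acts transitively on its fibers: if q and r are prime ideals of S with q ∩ R = r ∩ R, then there exists g ∈ G with g • q = r. -/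
open Pointwise

/-- The subring of `G`-fixed points of a ring `S` with an action of `G` by ring
automorphisms. -/
def fixedSubring (G S : Type*) [Monoid G] [CommRing S] [MulSemiringAction G S] :
    Subring S where
  carrier := {s : S | ∀ g : G, g • s = s}
  mul_mem' := fun {a b} ha hb g => by rw [smul_mul', ha g, hb g]
  one_mem' := fun g => smul_one g
  add_mem' := fun {a b} ha hb g => by rw [smul_add, ha g, hb g]
  zero_mem' := fun g => smul_zero g
  neg_mem' := fun {a} ha g => by rw [smul_neg, ha g]

/-- `S` is integral over its fixed subring under a finite group action. -/
theorem fixedSubring.isIntegral (G S : Type*) [Group G] [Finite G] [CommRing S]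
    [MulSemiringAction G S] : Algebra.IsIntegral (fixedSubring G S) S := by
  have := Fintype.ofFinite G
  constructor
  intro s
  set p := prodXSubSMul G S s with hp
  have hc : (↑p.coeffs : Set S) ⊆ (fixedSubring G S : Set S) := by
    intro a ha
    obtain ⟨n, -, rfl⟩ := Polynomial.mem_coeffs_iff.mp ha
    exact fun g => prodXSubSMul.coeff G S s g n
  refine ⟨p.toSubring _ hc, (Polynomial.monic_toSubring _ _ _).mpr (prodXSubSMul.monic G S s), ?_⟩
  have : Polynomial.map (algebraMap (fixedSubring G S) S) (p.toSubring _ hc) = p := by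
    ext n
    simp [Polynomial.coeff_map]
    exact Polynomial.coeff_toSubring p _ hc
  rw [← Polynomial.eval_map, this]
  exact prodXSubSMul.eval G S s

/-- For a finite group `G` acting on a commutative ring `S` with fixed subring `R = Sᴳ`,
the map `Spec S → Spec R` is surjective and `G` acts transitively on its fibres. -/
theorem spec_surjective_and_transitive_of_finite_group_action
    (G S : Type*) [Group G] [Finite G] [CommRing S] [MulSemiringAction G S] :
    Function.Surjective
      (PrimeSpectrum.comap (fixedSubring G S).subtype :
        PrimeSpectrum S → PrimeSpectrum (fixedSubring G S)) ∧
    ∀ q r : Ideal S, q.IsPrime → r.IsPrime →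
      Ideal.comap (fixedSubring G S).subtype q = Ideal.comap (fixedSubring G S).subtype r →
      ∃ g : G, g • q = r := by
  have := Fintype.ofFinite G
  have hint := fixedSubring.isIntegral G S
  have halg : (algebraMap (fixedSubring G S) S) = (fixedSubring G S).subtype := rfl
  constructor
  · intro p
    have hp : p.asIdeal.IsPrime := p.isPrime
    obtain ⟨Q, -, hQ, hQ'⟩ := Ideal.exists_ideal_over_prime_of_isIntegral p.asIdeal ⊥
      (by intro x hx; simp only [Ideal.mem_comap, Ideal.mem_bot] at hx
          have : x = 0 := Subtype.ext hx
          rw [this]; exact p.asIdeal.zero_mem)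
    exact ⟨⟨Q, hQ⟩, PrimeSpectrum.ext hQ'⟩
  · intro q r hq hr hcomap
    -- norm argument: q ⊆ ⋃ g, g • r
    have hsub : (q : Set S) ⊆ ⋃ g ∈ (Finset.univ : Finset G), ((g • r : Ideal S) : Set S) := by
      intro x hx
      set N : S := ∏ g : G, g • x with hN
      have hNfix : N ∈ fixedSubring G S := by
        intro g
        rw [hN, Finset.smul_prod']
        exact Fintype.prod_equiv (Equiv.mulLeft g) _ _ fun h => (mul_smul g h x).symm
      classical
      have hNq : N ∈ q := by
        rw [hN, ← Finset.prod_erase_mul _ _ (Finset.mem_univ (1 : G))]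
        exact q.mul_mem_left _ (by rw [one_smul]; exact hx)
      have hNr : N ∈ r := by
        have : (⟨N, hNfix⟩ : fixedSubring G S) ∈ Ideal.comap (fixedSubring G S).subtype q := hNq
        rw [hcomap] at this
        exact this
      obtain ⟨c, -, hc⟩ := (Ideal.IsPrime.prod_mem_iff (hp := hr)).mp hNr
      refine Set.mem_iUnion₂.mpr ⟨c⁻¹, Finset.mem_univ _, ?_⟩
      rw [SetLike.mem_coe, Ideal.mem_pointwise_smul_iff_inv_smul_mem, inv_inv]
      exact hc
    obtain ⟨g, -, hg⟩ := (Ideal.subset_union_prime (1 : G) 1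
      (fun i _ _ _ => Ideal.IsPrime.smul i)).mp hsub
    -- q ≤ g • r, same comap ⇒ equal
    have hcomap2 : Ideal.comap (fixedSubring G S).subtype (g • r)
        = Ideal.comap (fixedSubring G S).subtype r := by
      ext x
      simp only [Ideal.mem_comap]
      show (x : S) ∈ g • r ↔ (x : S) ∈ r
      rw [Ideal.mem_pointwise_smul_iff_inv_smul_mem, x.2 g⁻¹]
    have heq : q = g • r := by
      by_contra hne
      have hlt : q < g • r := lt_of_le_of_ne hg hne
      obtain ⟨-, x, hxgr, hxq⟩ := SetLike.lt_iff_le_and_exists.mp hlt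
      have := Ideal.comap_lt_comap_of_integral_mem_sdiff (R := fixedSubring G S) (S := S) hg
        ⟨hxgr, hxq⟩ (Algebra.IsIntegral.isIntegral x)
      rw [halg, hcomap2, ← hcomap] at this
      exact lt_irrefl _ this
    exact ⟨g⁻¹, by rw [heq, inv_smul_smul]⟩
end

section
/- Let R be a commutative ring and I₁, …, I_m a finite family of ideals of R such that every prime ideal of R contains exactly one of the ideals I_α. Then there exists a unique family of ideals J₁, …, J_m such that J_α ⊆ I_α ⊆ √(J_α) for every α and the natural ring homomorphism R → ∏_{α=1}^m R/J_α (with components the quotient maps) is an isomorphism. -/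
/-- An idempotent nilpotent element is zero. -/
lemma idem_nilpotent_eq_zero {R : Type*} [CommRing R] {x : R}
    (hx : IsIdempotentElem x) (hn : IsNilpotent x) : x = 0 := by
  obtain ⟨n, hn⟩ := hn
  rcases n with _ | n
  · rw [pow_zero] at hn
    calc x = x * 1 := (mul_one x).symm
      _ = x * 0 := by rw [hn]
      _ = 0 := mul_zero x
  · rw [hx.pow_succ_eq] at hn; exact hn

/-- An idempotent element of the radical of an ideal lies in the ideal. -/
lemma idem_mem_of_mem_radical {R : Type*} [CommRing R] {K : Ideal R} {x : R}
    (hx : IsIdempotentElem x) (hm : x ∈ K.radical) : x ∈ K := by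
  obtain ⟨n, hn⟩ := hm
  rcases n with _ | n
  · simp only [pow_zero] at hn
    exact K.eq_top_iff_one.mpr hn ▸ Submodule.mem_top
  · rwa [hx.pow_succ_eq] at hn

lemma radical_eq_of_le_of_le_radical {R : Type*} [CommRing R] {J K : Ideal R}
    (h1 : J ≤ K) (h2 : K ≤ J.radical) : K.radical = J.radical := by
  refine le_antisymm ?_ (Ideal.radical_mono h1)
  calc K.radical ≤ J.radical.radical := Ideal.radical_mono h2
    _ = J.radical := J.radical_idem

/-- Two idempotents generating ideals with the same radical are equal. -/
lemma idem_eq_of_radical_span_eq {R : Type*} [CommRing R] {a b : R}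
    (ha : IsIdempotentElem a) (hb : IsIdempotentElem b)
    (h : (Ideal.span {a}).radical = (Ideal.span {b}).radical) : a = b := by
  have hab : a * b = a := by
    have : a ∈ Ideal.span {b} :=
      idem_mem_of_mem_radical ha (h ▸ Ideal.le_radical (Ideal.subset_span rfl))
    obtain ⟨c, hc⟩ := Ideal.mem_span_singleton'.mp this
    have := hb
    unfold IsIdempotentElem at this
    calc a * b = c * b * b := by rw [hc]
      _ = c * (b * b) := by ring
      _ = c * b := by rw [this]
      _ = a := hc
  have hba : b * a = b := by
    have : b ∈ Ideal.span {a} :=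
      idem_mem_of_mem_radical hb (h ▸ Ideal.le_radical (Ideal.subset_span rfl))
    obtain ⟨c, hc⟩ := Ideal.mem_span_singleton'.mp this
    have := ha
    unfold IsIdempotentElem at this
    calc b * a = c * a * a := by rw [hc]
      _ = c * (a * a) := by ring
      _ = c * a := by rw [this]
      _ = b := hc
  calc a = a * b := hab.symm
    _ = b * a := mul_comm _ _
    _ = b := hba

/-- If every prime of `R` contains exactly one of the ideals `I α`, then there is a
unique family of ideals `J α` with `J α ⊆ I α ⊆ √(J α)` such that the natural map
`R → ∏ α, R/J α` is an isomorphism. -/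
theorem exists_unique_product_decomposition {R : Type*} [CommRing R] (m : ℕ)
    (I : Fin m → Ideal R)
    (h : ∀ P : Ideal R, P.IsPrime → ∃! α : Fin m, I α ≤ P) :
    ∃! J : Fin m → Ideal R,
      (∀ α, J α ≤ I α ∧ I α ≤ (J α).radical) ∧
      Function.Bijective (Pi.ringHom fun α => Ideal.Quotient.mk (J α)) := by
  classical
  -- each zero locus is clopen
  have hclopen : ∀ α, IsClopen (PrimeSpectrum.zeroLocus (R := R) (I α)) := by
    intro α
    refine ⟨PrimeSpectrum.isClosed_zeroLocus _, ?_⟩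
    rw [← isClosed_compl_iff]
    have heq : (PrimeSpectrum.zeroLocus (R := R) (I α))ᶜ =
        ⋃ β ∈ ({α}ᶜ : Set (Fin m)), PrimeSpectrum.zeroLocus (R := R) (I β) := by
      ext P
      simp only [Set.mem_compl_iff, PrimeSpectrum.mem_zeroLocus, Set.mem_iUnion,
        Set.mem_singleton_iff, exists_prop]
      constructor
      · intro hα
        obtain ⟨β, hβ, -⟩ := h P.asIdeal P.isPrime
        exact ⟨β, fun hβα => hα (hβα ▸ hβ), hβ⟩
      · rintro ⟨β, hβα, hβ⟩ hα
        exact hβα ((h P.asIdeal P.isPrime).unique hβ hα)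
    rw [heq]
    exact Set.Finite.isClosed_biUnion (Set.toFinite _)
      (fun β _ => PrimeSpectrum.isClosed_zeroLocus _)
  -- choose idempotents
  choose e he hbo using fun α =>
    PrimeSpectrum.exists_idempotent_basicOpen_eq_of_isClopen (hclopen α)
  -- key: for a prime P, e α ∉ P ↔ I α ≤ P
  have key : ∀ (P : Ideal R), P.IsPrime → ∀ α, (e α ∉ P ↔ I α ≤ P) := by
    intro P hP α
    have := Set.ext_iff.mp (hbo α) ⟨P, hP⟩
    simpa [PrimeSpectrum.mem_zeroLocus, SetLike.coe_subset_coe] using this.symm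
  have key' : ∀ (P : Ideal R), P.IsPrime → ∀ α, ¬ I α ≤ P → e α ∈ P := by
    intro P hP α hα
    by_contra he'
    exact hα ((key P hP α).mp he')
  have key'' : ∀ (P : Ideal R), P.IsPrime → ∀ α, I α ≤ P → 1 - e α ∈ P := by
    intro P hP α hα
    have h0 : e α * (1 - e α) = 0 := by
      have hi := he α
      unfold IsIdempotentElem at hi
      linear_combination -hi
    rcases hP.mem_or_mem (h0 ▸ P.zero_mem) with h' | h'
    · exact absurd h' ((key P hP α).mpr hα)
    · exact h'
  -- orthogonality
  have orth : ∀ α β, α ≠ β → e α * e β = 0 := by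
    intro α β hab
    refine idem_nilpotent_eq_zero ((he α).mul_of_commute (mul_comm _ _) (he β)) ?_
    rw [nilpotent_iff_mem_prime]
    intro P hP
    obtain ⟨γ, hγ, -⟩ := h P hP
    rcases eq_or_ne γ α with rfl | hgα
    · exact P.mul_mem_left _ (key' P hP β (fun hβ => hab ((h P hP).unique hγ hβ)))
    · exact P.mul_mem_right _ (key' P hP α (fun hα => hgα ((h P hP).unique hγ hα)))
  -- the sum of the idempotents is one
  have hsum : ∑ α, e α = 1 := by
    have hs : IsIdempotentElem (∑ α, e α) := by
      unfold IsIdempotentElem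
      rw [Finset.sum_mul_sum]
      rw [Finset.sum_congr rfl (fun α _ => Finset.sum_eq_single_of_mem α (Finset.mem_univ α)
        (fun β _ hβ => orth α β (Ne.symm hβ)))]
      exact Finset.sum_congr rfl fun α _ => he α
    have hn : IsNilpotent (1 - ∑ α, e α) := by
      rw [nilpotent_iff_mem_prime]
      intro P hP
      obtain ⟨γ, hγ, -⟩ := h P hP
      have h1 : (∑ α, e α) - e γ ∈ P := by
        rw [← Finset.sum_erase_add _ _ (Finset.mem_univ γ), add_sub_cancel_right]
        exact Ideal.sum_mem _ fun β hβ =>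
          key' P hP β (fun hb => (Finset.mem_erase.mp hβ).1 ((h P hP).unique hb hγ))
      have h2 : 1 - e γ ∈ P := key'' P hP γ hγ
      have h3 : (1 - e γ) - ((∑ α, e α) - e γ) = 1 - ∑ α, e α := by ring
      exact h3 ▸ P.sub_mem h2 h1
    have := idem_nilpotent_eq_zero hs.one_sub hn
    linear_combination -this
  -- the family J
  set J : Fin m → Ideal R := fun α => Ideal.span {1 - e α} with hJdef
  -- 1 - e α ∈ I α
  have hmem : ∀ α, 1 - e α ∈ I α := by
    intro α
    refine idem_mem_of_mem_radical (he α).one_sub ?_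
    rw [Ideal.radical_eq_sInf, Submodule.mem_sInf]
    rintro P ⟨hle, hP⟩
    exact key'' P hP α hle
  have hJI : ∀ α, J α ≤ I α := fun α =>
    (Ideal.span_le).mpr (Set.singleton_subset_iff.mpr (hmem α))
  have hIJ : ∀ α, I α ≤ (J α).radical := by
    intro α x hx
    have h1 : x * (1 - e α) ∈ J α := Ideal.mul_mem_left _ _ (Ideal.subset_span rfl)
    have h2 : IsNilpotent (x * e α) := by
      rw [nilpotent_iff_mem_prime]
      intro P hP
      by_cases hα : I α ≤ P
      · exact P.mul_mem_right _ (hα hx)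
      · exact P.mul_mem_left _ (key' P hP α hα)
    have h3 : x * e α ∈ (J α).radical := by
      obtain ⟨n, hn⟩ := h2
      exact ⟨n, hn ▸ (J α).zero_mem⟩
    have h4 : x = x * (1 - e α) + x * e α := by ring
    rw [h4]
    exact Ideal.add_mem _ (Ideal.le_radical h1) h3
  -- membership in J α
  have memJ : ∀ α (x : R), x ∈ J α ↔ x * e α = 0 := by
    intro α x
    rw [hJdef]
    simp only []
    rw [Ideal.mem_span_singleton']
    constructor
    · rintro ⟨c, rfl⟩
      have hi := he α
      unfold IsIdempotentElem at hi
      linear_combination -c * hi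
    · intro hx
      exact ⟨x, by linear_combination -hx⟩
  -- bijectivity
  have hbij : Function.Bijective (Pi.ringHom fun α => Ideal.Quotient.mk (J α)) := by
    constructor
    · rw [injective_iff_map_eq_zero]
      intro x hx
      have hx' : ∀ α, x ∈ J α := fun α =>
        Ideal.Quotient.eq_zero_iff_mem.mp (congrFun hx α)
      have hxe : x = ∑ α, x * e α := by rw [← Finset.mul_sum, hsum, mul_one]
      rw [hxe]
      exact Finset.sum_eq_zero fun α _ => (memJ α x).mp (hx' α)
    · intro g
      choose x hxg using fun α => Ideal.Quotient.mk_surjective (g α)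
      refine ⟨∑ β, x β * e β, ?_⟩
      funext α
      show Ideal.Quotient.mk (J α) (∑ β, x β * e β) = g α
      rw [← hxg α, Ideal.Quotient.mk_eq_mk_iff_sub_mem]
      have hd : (∑ β, x β * e β) - x α = ∑ β, (x β - x α) * e β := by
        have : ∑ β, (x β - x α) * e β = (∑ β, x β * e β) - x α * ∑ β, e β := by
          rw [Finset.mul_sum, ← Finset.sum_sub_distrib]
          exact Finset.sum_congr rfl fun β _ => by ring
        rw [this, hsum, mul_one]
      rw [hd]
      refine Ideal.sum_mem _ fun β _ => (memJ α _).mpr ?_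
      rcases eq_or_ne β α with rfl | hβα
      · rw [sub_self, zero_mul, zero_mul]
      · have := orth β α hβα
        linear_combination (x β - x α) * this
  refine ⟨J, ⟨fun α => ⟨hJI α, hIJ α⟩, hbij⟩, ?_⟩
  -- uniqueness
  rintro J' ⟨hJ'cond, hbij'⟩
  choose f hf using fun α => hbij'.surjective (Pi.single α 1)
  have hfidem : ∀ α, IsIdempotentElem (f α) := by
    intro α
    apply hbij'.injective
    show Pi.ringHom _ (f α * f α) = _
    rw [map_mul, hf α]
    funext β
    rcases eq_or_ne β α with rfl | hβα <;> simp [Pi.single_apply, *]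
  have hJ'eq : ∀ α, J' α = Ideal.span {1 - f α} := by
    intro α
    apply le_antisymm
    · intro y hy
      rw [Ideal.mem_span_singleton']
      refine ⟨y, ?_⟩
      have h0 : y * f α = 0 := by
        apply hbij'.injective
        show Pi.ringHom _ (y * f α) = Pi.ringHom _ 0
        rw [map_mul, hf α, map_zero]
        funext β
        rcases eq_or_ne β α with rfl | hβα
        · show Ideal.Quotient.mk (J' β) y * _ = 0
          rw [Ideal.Quotient.eq_zero_iff_mem.mpr hy]
          simp
        · show Ideal.Quotient.mk (J' β) y * _ = 0
          simp [Pi.single_apply, hβα]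
      linear_combination -h0
    · rw [Ideal.span_le, Set.singleton_subset_iff]
      have h0 : (Pi.ringHom fun β => Ideal.Quotient.mk (J' β)) (1 - f α) α = 0 := by
        rw [map_sub, hf α, map_one]
        simp
      exact Ideal.Quotient.eq_zero_iff_mem.mp h0
  have hrad : ∀ α, (Ideal.span {1 - f α}).radical = (Ideal.span {1 - e α}).radical := by
    intro α
    have h1 : (I α).radical = (J' α).radical :=
      radical_eq_of_le_of_le_radical (hJ'cond α).1 (hJ'cond α).2
    have h2 : (I α).radical = (J α).radical :=
      radical_eq_of_le_of_le_radical (hJI α) (hIJ α)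
    rw [← hJ'eq α, ← h1, h2, hJdef]
  funext α
  rw [hJ'eq α, idem_eq_of_radical_span_eq (hfidem α).one_sub (he α).one_sub (hrad α)]
end

section
/- (Weierstrass division) Let R be a commutative ring, n ∈ ℕ, and g ∈ R⟦X⟧ a power series whose constant coefficient is nilpotent, whose coefficient in each degree k < n is nilpotent, and whose coefficient in degree n is a unit. Regard R⟦X⟧ as an R⟦Y⟧-algebra via the substitution homomorphism R⟦Y⟧ → R⟦X⟧ sending a series f(Y) to f(g(X)). Then R⟦X⟧ is a free R⟦Y⟧-module with basis 1, X, X², …, X^{n−1}. -/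
open scoped Classical

/-- Substitution of a power series `g` (with nilpotent constant term) into a power
series `f`: the coefficients of `f(g)` are the eventual values of the coefficients of
the partial evaluations `(trunc L f)(g)`. -/
noncomputable def PowerSeries.substOf {R : Type*} [CommRing R] (g f : PowerSeries R) :
    PowerSeries R :=
  PowerSeries.mk fun m =>
    if h : ∃ c : R, ∃ K : ℕ, ∀ L : ℕ, K ≤ L →
        PowerSeries.coeff m (Polynomial.aeval g (PowerSeries.trunc L f)) = c
    then h.choose else 0

open PowerSeries Finset

namespace WDiv
variable {R : Type*} [CommRing R]

lemma coeff_pow_mul_cpow (g : PowerSeries R) {N : ℕ}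
    (hN : (constantCoeff g) ^ N = 0) :
    ∀ j s m : ℕ, m + N ≤ j + s →
      (PowerSeries.coeff m (g ^ j)) * (constantCoeff g) ^ s = 0 := by
  intro j
  induction j with
  | zero =>
    intro s m hm
    rcases Nat.eq_zero_or_pos m with rfl | hm0
    · simp only [pow_zero, PowerSeries.coeff_one, if_pos rfl, one_mul]
      have : s = N + (s - N) := by omega
      rw [this, pow_add, hN, zero_mul, mul_zero]
    · rw [pow_zero, PowerSeries.coeff_one, if_neg (by omega), zero_mul]
  | succ j ih =>
    intro s m hm
    rw [pow_succ, PowerSeries.coeff_mul, Finset.sum_mul]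
    apply Finset.sum_eq_zero
    rintro ⟨u, v⟩ huv
    have huv' : u + v = m := Finset.HasAntidiagonal.mem_antidiagonal.mp huv
    rcases Nat.eq_zero_or_pos v with rfl | hv
    · have hu : m = u := by omega
      subst hu
      have : PowerSeries.coeff 0 g = constantCoeff g := by
        simp [PowerSeries.coeff_zero_eq_constantCoeff]
      simp only [this]
      calc PowerSeries.coeff m (g ^ j) * constantCoeff g * constantCoeff g ^ s
          = PowerSeries.coeff m (g ^ j) * constantCoeff g ^ (s + 1) := by ring
        _ = 0 := ih (s+1) m (by omega)
    · calc PowerSeries.coeff u (g ^ j) * PowerSeries.coeff v g * constantCoeff g ^ s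
          = PowerSeries.coeff u (g ^ j) * constantCoeff g ^ s * PowerSeries.coeff v g := by
            ring
        _ = 0 := by rw [ih s u (by omega), zero_mul]

lemma coeff_pow_eq_zero (g : PowerSeries R) {N : ℕ}
    (hN : (constantCoeff g) ^ N = 0) {j m : ℕ} (hm : m + N ≤ j) :
    PowerSeries.coeff m (g ^ j) = 0 := by
  have := coeff_pow_mul_cpow g hN j 0 m (by omega)
  simpa using this

lemma coeff_aeval_trunc (g f : PowerSeries R) (L m : ℕ) :
    PowerSeries.coeff m (Polynomial.aeval g (PowerSeries.trunc (L+1) f)) =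
      ∑ j ∈ Finset.range (L+1), PowerSeries.coeff j f * PowerSeries.coeff m (g ^ j) := by
  rw [Polynomial.aeval_eq_sum_range' (PowerSeries.natDegree_trunc_lt f L), map_sum]
  apply Finset.sum_congr rfl
  intro j hj
  rw [PowerSeries.coeff_trunc, if_pos (Finset.mem_range.mp hj), map_smul, smul_eq_mul]

lemma coeff_substOf (g f : PowerSeries R) {N : ℕ} (hN : (constantCoeff g) ^ N = 0)
    {L m : ℕ} (hL : m + N ≤ L + 1) :
    PowerSeries.coeff m (PowerSeries.substOf g f) =
      ∑ j ∈ Finset.range (L+1), PowerSeries.coeff j f * PowerSeries.coeff m (g ^ j) := by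
  have key : ∀ L' : ℕ, m + N ≤ L' + 1 →
      PowerSeries.coeff m (Polynomial.aeval g (PowerSeries.trunc (L'+1) f)) =
        ∑ j ∈ Finset.range (m + N), PowerSeries.coeff j f * PowerSeries.coeff m (g ^ j) := by
    intro L' hL'
    rw [coeff_aeval_trunc]
    symm
    apply Finset.sum_subset
    · intro x hx
      simp only [Finset.mem_range] at hx ⊢
      omega
    · intro x _ hx
      simp only [Finset.mem_range, not_lt] at hx
      rw [coeff_pow_eq_zero g hN hx, mul_zero]
  have hcond : ∃ c : R, ∃ K : ℕ, ∀ L'' : ℕ, K ≤ L'' →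
      PowerSeries.coeff m (Polynomial.aeval g (PowerSeries.trunc L'' f)) = c := by
    refine ⟨∑ j ∈ Finset.range (m + N), PowerSeries.coeff j f * PowerSeries.coeff m (g ^ j),
      m + N + 1, ?_⟩
    intro L'' hL''
    obtain ⟨L', rfl⟩ : ∃ L', L'' = L' + 1 := ⟨L'' - 1, by omega⟩
    exact key L' (by omega)
  have : PowerSeries.coeff m (PowerSeries.substOf g f) = hcond.choose := by
    rw [PowerSeries.substOf, PowerSeries.coeff_mk, dif_pos hcond]
  rw [this]
  obtain ⟨K, hK⟩ := hcond.choose_spec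
  have h1 := hK (max K (m + N + 1)) (le_max_left _ _)
  obtain ⟨L', hLe⟩ : ∃ L', max K (m + N + 1) = L' + 1 := ⟨max K (m+N+1) - 1, by omega⟩
  rw [hLe] at h1
  rw [← h1, key L' (by omega)]
  apply Finset.sum_subset
  · intro x hx
    simp only [Finset.mem_range] at hx ⊢
    omega
  · intro x _ hx
    simp only [Finset.mem_range, not_lt] at hx
    rw [coeff_pow_eq_zero g hN (by omega), mul_zero]

lemma substOf_add (g f f' : PowerSeries R) {N : ℕ} (hN : (constantCoeff g) ^ N = 0) :
    PowerSeries.substOf g (f + f') = PowerSeries.substOf g f + PowerSeries.substOf g f' := by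
  ext m
  rw [map_add, coeff_substOf g (f + f') hN (show m + N ≤ (m+N) + 1 by omega),
    coeff_substOf g f hN (show m + N ≤ (m+N) + 1 by omega),
    coeff_substOf g f' hN (show m + N ≤ (m+N) + 1 by omega), ← Finset.sum_add_distrib]
  apply Finset.sum_congr rfl
  intro j _
  rw [map_add, add_mul]

lemma isNilpotent_span_finset (s : Finset R) (hs : ∀ a ∈ s, IsNilpotent a) :
    IsNilpotent (Ideal.span (s : Set R)) := by
  classical
  induction s using Finset.induction_on with
  | empty => exact ⟨1, by simp [Ideal.span_empty]⟩
  | @insert a s' ha ih =>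
    rw [Finset.coe_insert, Ideal.span_insert]
    have h1 : IsNilpotent (Ideal.span ({a} : Set R)) := by
      obtain ⟨k, hk⟩ := hs a (Finset.mem_insert_self a s')
      exact ⟨k, by rw [Ideal.span_singleton_pow, hk, Ideal.span_singleton_eq_bot.mpr rfl]; rfl⟩
    have h2 : IsNilpotent (Ideal.span (s' : Set R)) :=
      ih fun x hx => hs x (Finset.mem_insert_of_mem hx)
    have h3 := Commute.isNilpotent_add (Commute.all _ _) h1 h2
    rwa [← Submodule.add_eq_sup]

/-- The matrix of the Weierstrass division linear system. -/
noncomputable def Adef (g : PowerSeries R) (n : ℕ) : ℕ → ℕ → R := fun m m' =>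
  if m' % n ≤ m then PowerSeries.coeff (m - m' % n) (g ^ (m' / n)) else 0

noncomputable def Phi (g : PowerSeries R) (n : ℕ) (c : Fin n → PowerSeries R) :
    PowerSeries R :=
  ∑ i : Fin n, PowerSeries.substOf g (c i) * PowerSeries.X ^ (i : ℕ)

lemma coeff_Phi (g : PowerSeries R) (n : ℕ) (hn1 : 0 < n) {N : ℕ} (hN1 : 0 < N)
    (hN : (constantCoeff g) ^ N = 0) (c : Fin n → PowerSeries R) (m : ℕ) :
    PowerSeries.coeff m (Phi g n c) =
      ∑ m' ∈ Finset.range (n * (m + N)),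
        PowerSeries.coeff (m' / n) (c ⟨m' % n, Nat.mod_lt m' hn1⟩) * Adef g n m m' := by
  obtain ⟨L, hLe⟩ : ∃ L, m + N = L + 1 := ⟨m + N - 1, by omega⟩
  rw [Phi, map_sum]
  have step1 : ∀ i : Fin n,
      PowerSeries.coeff m (PowerSeries.substOf g (c i) * PowerSeries.X ^ (i : ℕ)) =
        ∑ j ∈ Finset.range (m + N),
          PowerSeries.coeff j (c i) * Adef g n m (n * j + (i : ℕ)) := by
    intro i
    have hmod : ∀ j : ℕ, (n * j + (i : ℕ)) % n = (i : ℕ) :=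
      fun j => by rw [Nat.mul_add_mod]; exact Nat.mod_eq_of_lt i.2
    have hdiv : ∀ j : ℕ, (n * j + (i : ℕ)) / n = j := by
      intro j
      rw [Nat.mul_add_div hn1, Nat.div_eq_of_lt i.2, add_zero]
    rw [PowerSeries.coeff_mul_X_pow']
    by_cases him : (i : ℕ) ≤ m
    · rw [if_pos him, coeff_substOf g (c i) hN (show (m - (i:ℕ)) + N ≤ L + 1 by omega), hLe]
      apply Finset.sum_congr rfl
      intro j _
      rw [Adef, hmod, hdiv, if_pos him]
    · rw [if_neg him]
      symm
      apply Finset.sum_eq_zero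
      intro j _
      rw [Adef, hmod, if_neg him, mul_zero]
  rw [Finset.sum_congr rfl fun i _ => step1 i, ← Finset.sum_product']
  apply Finset.sum_nbij' (i := fun p : Fin n × ℕ => n * p.2 + (p.1 : ℕ))
    (j := fun m' => (⟨m' % n, Nat.mod_lt m' hn1⟩, m' / n))
  · rintro ⟨i, j⟩ hp
    simp only [Finset.mem_product, Finset.mem_range] at hp ⊢
    have hi := i.2
    have h3 := Nat.mul_le_mul_left n (show j + 1 ≤ m + N by omega)
    have h4 : n * (j + 1) = n * j + n := Nat.mul_succ n j
    omega
  · intro m' hm'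
    simp only [Finset.mem_range] at hm'
    simp only [Finset.mem_product, Finset.mem_range, Finset.mem_univ, true_and]
    by_contra hcon
    rw [not_lt] at hcon
    have h3 := Nat.mul_le_mul_left n hcon
    have h4 := Nat.div_add_mod m' n
    omega
  · rintro ⟨i, j⟩ hp
    have h1 : (n * j + (i : ℕ)) % n = (i : ℕ) := by
      rw [Nat.mul_add_mod]; exact Nat.mod_eq_of_lt i.2
    have h2 : (n * j + (i : ℕ)) / n = j := by
      rw [Nat.mul_add_div hn1, Nat.div_eq_of_lt i.2, add_zero]
    exact Prod.ext (Fin.ext h1) h2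
  · intro m' hm'
    exact Nat.div_add_mod m' n
  · rintro ⟨i, j⟩ hp
    have h1 : (n * j + (i : ℕ)) % n = (i : ℕ) := by
      rw [Nat.mul_add_mod]; exact Nat.mod_eq_of_lt i.2
    have h2 : (n * j + (i : ℕ)) / n = j := by
      rw [Nat.mul_add_div hn1, Nat.div_eq_of_lt i.2, add_zero]
    simp only [h1, h2, Fin.eta]

/-- The ideal generated by the low coefficients of `g`. -/
noncomputable def Idl (g : PowerSeries R) (n : ℕ) : Ideal R :=
  Ideal.span ((Finset.image (fun k => PowerSeries.coeff k g) (Finset.range n) : Finset R) : Set R)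

lemma coeff_mem_Idl (g : PowerSeries R) {n k : ℕ} (hk : k < n) :
    PowerSeries.coeff k g ∈ Idl g n :=
  Ideal.subset_span (by
    simp only [Finset.coe_image, Finset.coe_range, Set.mem_image, Set.mem_Iio]
    exact ⟨k, hk, rfl⟩)

lemma coeff_pow_mem_Idl (g : PowerSeries R) (n : ℕ) :
    ∀ q s : ℕ, s < n * q → PowerSeries.coeff s (g ^ q) ∈ Idl g n := by
  intro q
  induction q with
  | zero => intro s hs; omega
  | succ q ih =>
    intro s hs
    rw [pow_succ, PowerSeries.coeff_mul]
    apply Ideal.sum_mem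
    rintro ⟨u, v⟩ huv
    have huv' : u + v = s := Finset.HasAntidiagonal.mem_antidiagonal.mp huv
    by_cases hv : v < n
    · exact Ideal.mul_mem_left _ _ (coeff_mem_Idl g hv)
    · apply Ideal.mul_mem_right
      apply ih
      have : n * (q + 1) = n * q + n := Nat.mul_succ n q
      omega

lemma coeff_diag_sub_pow_mem_Idl (g : PowerSeries R) (n : ℕ) :
    ∀ q : ℕ, PowerSeries.coeff (n * q) (g ^ q) - (PowerSeries.coeff n g) ^ q ∈ Idl g n := by
  intro q
  induction q with
  | zero => simp
  | succ q ih =>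
    have hmem : ((n * q, n) : ℕ × ℕ) ∈ Finset.HasAntidiagonal.antidiagonal (n * (q + 1)) := by
      rw [Finset.HasAntidiagonal.mem_antidiagonal, Nat.mul_succ]
    rw [pow_succ, PowerSeries.coeff_mul, ← Finset.sum_erase_add _ _ hmem]
    have hstep : ∀ p ∈ (Finset.HasAntidiagonal.antidiagonal (n * (q+1))).erase (n * q, n),
        PowerSeries.coeff p.1 (g ^ q) * PowerSeries.coeff p.2 g ∈ Idl g n := by
      rintro ⟨u, v⟩ hp
      rw [Finset.mem_erase, Finset.HasAntidiagonal.mem_antidiagonal] at hp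
      obtain ⟨hne, huv⟩ := hp
      rcases lt_trichotomy v n with hv | heq | hv
      · exact Ideal.mul_mem_left _ _ (coeff_mem_Idl g hv)
      · exfalso
        apply hne
        have hmul : n * (q + 1) = n * q + n := Nat.mul_succ n q
        exact Prod.ext (by omega) heq
      · apply Ideal.mul_mem_right
        apply coeff_pow_mem_Idl
        have : n * (q + 1) = n * q + n := Nat.mul_succ n q
        omega
    have hdiag : PowerSeries.coeff (n * q) (g ^ q) * PowerSeries.coeff n g -
        (PowerSeries.coeff n g) ^ (q + 1) =
        (PowerSeries.coeff (n * q) (g ^ q) - (PowerSeries.coeff n g) ^ q) *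
          PowerSeries.coeff n g := by
      rw [pow_succ]; ring
    have : (∑ p ∈ (Finset.HasAntidiagonal.antidiagonal (n * (q+1))).erase (n * q, n),
          PowerSeries.coeff p.1 (g ^ q) * PowerSeries.coeff p.2 g) +
          PowerSeries.coeff (n * q) (g ^ q) * PowerSeries.coeff n g -
          (PowerSeries.coeff n g) ^ (q + 1) =
        (∑ p ∈ (Finset.HasAntidiagonal.antidiagonal (n * (q+1))).erase (n * q, n),
          PowerSeries.coeff p.1 (g ^ q) * PowerSeries.coeff p.2 g) +
        ((PowerSeries.coeff (n * q) (g ^ q) - (PowerSeries.coeff n g) ^ q) *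
          PowerSeries.coeff n g) := by
      rw [← hdiag]; ring
    rw [this]
    exact Ideal.add_mem _ (Ideal.sum_mem _ hstep) (Ideal.mul_mem_right _ _ ih)

lemma Adef_diag (g : PowerSeries R) (n : ℕ) (hn1 : 0 < n) (m : ℕ) :
    Adef g n m m - (PowerSeries.coeff n g) ^ (m / n) ∈ Idl g n := by
  have h1 : m % n ≤ m := Nat.mod_le m n
  have h2 := Nat.div_add_mod m n
  rw [Adef, if_pos h1, (show m - m % n = n * (m / n) by omega)]
  exact coeff_diag_sub_pow_mem_Idl g n (m / n)

lemma Adef_off (g : PowerSeries R) (n : ℕ) {m m' : ℕ} (hmm : m < m') :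
    Adef g n m m' ∈ Idl g n := by
  rw [Adef]
  split
  · apply coeff_pow_mem_Idl
    have h2 := Nat.div_add_mod m' n
    omega
  · exact zero_mem _

/-- Triangular solver for the Weierstrass system. -/
noncomputable def solve (n : ℕ) (b : R) (A : ℕ → ℕ → R) (hc : ℕ → R) : ℕ → R
  | m => b ^ (m / n) *
      (hc m - ∑ m' ∈ (Finset.range m).attach, solve n b A hc m' * A m (m' : ℕ))
termination_by m => m
decreasing_by exact Finset.mem_range.mp m'.2

lemma solve_eq (n : ℕ) (b : R) (A : ℕ → ℕ → R) (hc : ℕ → R) (m : ℕ) :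
    solve n b A hc m =
      b ^ (m / n) * (hc m - ∑ m' ∈ Finset.range m, solve n b A hc m' * A m m') := by
  rw [solve, ← Finset.sum_attach (Finset.range m) (fun m' => solve n b A hc m' * A m m')]

lemma solve_mem (n : ℕ) (b : R) (A : ℕ → ℕ → R) (hc : ℕ → R) (J : Ideal R)
    (hhc : ∀ m, hc m ∈ J) : ∀ m, solve n b A hc m ∈ J := by
  intro m
  induction m using Nat.strong_induction_on with
  | _ m ih =>
    rw [solve_eq]
    apply Ideal.mul_mem_left
    apply Ideal.sub_mem _ (hhc m)
    apply Ideal.sum_mem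
    intro m' hm'
    exact Ideal.mul_mem_right _ _ (ih m' (Finset.mem_range.mp hm'))

lemma substOf_zero (g : PowerSeries R) {N : ℕ} (hN : (constantCoeff g) ^ N = 0) :
    PowerSeries.substOf g (0 : PowerSeries R) = 0 := by
  ext m
  rw [coeff_substOf g 0 hN (show m + N ≤ (m + N) + 1 by omega), map_zero]
  apply Finset.sum_eq_zero
  intro j _
  rw [map_zero, zero_mul]

lemma substOf_sum (g : PowerSeries R) {N : ℕ} (hN : (constantCoeff g) ^ N = 0)
    {α : Type*} (s : Finset α) (f : α → PowerSeries R) :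
    PowerSeries.substOf g (∑ t ∈ s, f t) = ∑ t ∈ s, PowerSeries.substOf g (f t) := by
  classical
  induction s using Finset.induction_on with
  | empty => simp [substOf_zero g hN]
  | @insert a s' ha ih =>
    rw [Finset.sum_insert ha, Finset.sum_insert ha, substOf_add g _ _ hN, ih]

lemma substOf_sub (g : PowerSeries R) {N : ℕ} (hN : (constantCoeff g) ^ N = 0)
    (f f' : PowerSeries R) :
    PowerSeries.substOf g (f - f') = PowerSeries.substOf g f - PowerSeries.substOf g f' := by
  ext m
  rw [map_sub, coeff_substOf g (f - f') hN (show m + N ≤ (m + N) + 1 by omega),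
    coeff_substOf g f hN (show m + N ≤ (m + N) + 1 by omega),
    coeff_substOf g f' hN (show m + N ≤ (m + N) + 1 by omega), ← Finset.sum_sub_distrib]
  apply Finset.sum_congr rfl
  intro j _
  rw [map_sub, sub_mul]

lemma Phi_sum (g : PowerSeries R) (n : ℕ) {N : ℕ} (hN : (constantCoeff g) ^ N = 0)
    {α : Type*} (s : Finset α) (ψ : α → (Fin n → PowerSeries R)) :
    Phi g n (∑ t ∈ s, ψ t) = ∑ t ∈ s, Phi g n (ψ t) := by
  rw [Phi]
  have hstep : ∀ i : Fin n,
      PowerSeries.substOf g ((∑ t ∈ s, ψ t) i) * PowerSeries.X ^ (i : ℕ) =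
        ∑ t ∈ s, PowerSeries.substOf g (ψ t i) * PowerSeries.X ^ (i : ℕ) := fun i => by
    rw [Finset.sum_apply, substOf_sum g hN, Finset.sum_mul]
  rw [Finset.sum_congr rfl fun i _ => hstep i, Finset.sum_comm]
  exact Finset.sum_congr rfl fun t _ => rfl

lemma Phi_sub (g : PowerSeries R) (n : ℕ) {N : ℕ} (hN : (constantCoeff g) ^ N = 0)
    (c c' : Fin n → PowerSeries R) :
    Phi g n (fun i => c i - c' i) = Phi g n c - Phi g n c' := by
  rw [Phi, Phi, Phi, ← Finset.sum_sub_distrib]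
  apply Finset.sum_congr rfl
  intro i _
  rw [substOf_sub g hN, sub_mul]

/-- Approximate inverse to `Phi`. -/
noncomputable def Psi (g : PowerSeries R) (n : ℕ) (b : R) (h : PowerSeries R) :
    Fin n → PowerSeries R :=
  fun i => PowerSeries.mk fun j =>
    solve n b (Adef g n) (fun m => PowerSeries.coeff m h) (n * j + (i : ℕ))

lemma coeff_Psi (g : PowerSeries R) (n : ℕ) (hn1 : 0 < n) (b : R) (h : PowerSeries R)
    (m' : ℕ) :
    PowerSeries.coeff (m' / n) (Psi g n b h ⟨m' % n, Nat.mod_lt m' hn1⟩) =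
      solve n b (Adef g n) (fun m => PowerSeries.coeff m h) m' := by
  rw [Psi, PowerSeries.coeff_mk, Nat.div_add_mod m' n]

lemma residual_mem (g : PowerSeries R) (n : ℕ) (hn1 : 0 < n) {N : ℕ} (hN1 : 0 < N)
    (hN : (constantCoeff g) ^ N = 0) {b : R} (hb : b * PowerSeries.coeff n g = 1)
    (h : PowerSeries R) (t : ℕ) (hh : ∀ m, PowerSeries.coeff m h ∈ (Idl g n) ^ t) :
    ∀ m, PowerSeries.coeff m (h - Phi g n (Psi g n b h)) ∈ (Idl g n) ^ (t + 1) := by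
  set I := Idl g n with hI
  set x := solve n b (Adef g n) (fun m => PowerSeries.coeff m h) with hx
  have hxmem : ∀ m, x m ∈ I ^ t := solve_mem n b (Adef g n) _ (I ^ t) hh
  intro m
  rw [map_sub, coeff_Phi g n hn1 hN1 hN]
  have hsum : ∀ m' ∈ Finset.range (n * (m + N)),
      PowerSeries.coeff (m' / n) (Psi g n b h ⟨m' % n, Nat.mod_lt m' hn1⟩) *
        Adef g n m m' = x m' * Adef g n m m' := by
    intro m' _
    rw [coeff_Psi g n hn1 b h m']
  rw [Finset.sum_congr rfl hsum]
  set K := n * (m + N) with hK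
  have hmK : m + 1 ≤ K := by
    have := Nat.le_mul_of_pos_left (m + N) hn1
    omega
  have hsplit : ∑ m' ∈ Finset.range K, x m' * Adef g n m m' =
      (∑ m' ∈ Finset.range m, x m' * Adef g n m m') + x m * Adef g n m m +
        ∑ m' ∈ Finset.Ico (m + 1) K, x m' * Adef g n m m' := by
    rw [← Finset.sum_range_add_sum_Ico _ hmK, Finset.sum_range_succ]
  have hsolve : (PowerSeries.coeff n g) ^ (m / n) * x m =
      PowerSeries.coeff m h - ∑ m' ∈ Finset.range m, x m' * Adef g n m m' := by
    rw [hx, solve_eq, ← mul_assoc, ← mul_pow, mul_comm (PowerSeries.coeff n g) b, hb,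
      one_pow, one_mul]
  rw [hsplit]
  have key : PowerSeries.coeff m h -
      ((∑ m' ∈ Finset.range m, x m' * Adef g n m m') + x m * Adef g n m m +
        ∑ m' ∈ Finset.Ico (m + 1) K, x m' * Adef g n m m') =
      x m * ((PowerSeries.coeff n g) ^ (m / n) - Adef g n m m) -
        ∑ m' ∈ Finset.Ico (m + 1) K, x m' * Adef g n m m' := by
    linear_combination -hsolve
  rw [key, pow_succ]
  apply Ideal.sub_mem
  · apply Ideal.mul_mem_mul (hxmem m)
    have := (Idl g n).neg_mem (Adef_diag g n hn1 m)
    rwa [neg_sub] at this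
  · apply Ideal.sum_mem
    intro m' hm'
    rw [Finset.mem_Ico] at hm'
    exact Ideal.mul_mem_mul (hxmem m') (Adef_off g n (by omega))

end WDiv

open WDiv in
/-- Weierstrass division: if `g` is a Weierstrass series of degree `n` (nilpotent
constant term, nilpotent coefficients below degree `n`, unit coefficient in degree
`n`), then `R⟦X⟧`, regarded as an `R⟦Y⟧`-module via `f • h = f(g)·h`, is free with
basis `1, X, …, X^(n-1)`: every `h` is uniquely `h = ∑ i < n, (c i)(g) · Xⁱ`. -/
theorem weierstrass_division {R : Type*} [CommRing R] (n : ℕ) (g : PowerSeries R)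
    (h0 : IsNilpotent (PowerSeries.constantCoeff g))
    (hlt : ∀ k < n, IsNilpotent (PowerSeries.coeff k g))
    (hn : IsUnit (PowerSeries.coeff n g)) :
    ∀ h : PowerSeries R, ∃! c : Fin n → PowerSeries R,
      h = ∑ i : Fin n, PowerSeries.substOf g (c i) * PowerSeries.X ^ (i : ℕ) := by
  intro h
  rcases Nat.eq_zero_or_pos n with rfl | hn1
  · -- trivial ring case
    obtain ⟨k, hk⟩ := h0
    have h01 : (0 : R) = 1 := by
      have hcc : PowerSeries.coeff 0 g = PowerSeries.constantCoeff g :=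
        PowerSeries.coeff_zero_eq_constantCoeff_apply g
      have hu : IsUnit ((PowerSeries.constantCoeff g) ^ k) := (hcc ▸ hn).pow k
      rw [hk] at hu
      exact isUnit_zero_iff.mp hu
    haveI : Subsingleton R := subsingleton_of_zero_eq_one h01
    refine ⟨fun _ => 0, ?_, ?_⟩
    · ext m
      exact Subsingleton.elim _ _
    · intro c' _
      funext i
      exact i.elim0
  · obtain ⟨N0, hN0⟩ := h0
    set N := N0 + 1 with hNdef
    have hN : (PowerSeries.constantCoeff g) ^ N = 0 := by rw [pow_succ, hN0, zero_mul]
    have hN1 : 0 < N := Nat.succ_pos _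
    have hb : ((hn.unit⁻¹ : Rˣ) : R) * PowerSeries.coeff n g = 1 := by
      have h3 := hn.unit.inv_mul
      rwa [IsUnit.unit_spec] at h3
    set b : R := ((hn.unit⁻¹ : Rˣ) : R) with hbdef
    have hnil : IsNilpotent (Idl g n) := by
      apply isNilpotent_span_finset
      intro a ha
      simp only [Finset.mem_image, Finset.mem_range] at ha
      obtain ⟨k, hk, rfl⟩ := ha
      exact hlt k hk
    obtain ⟨M, hM⟩ := hnil
    have hMz : ∀ r : R, r ∈ (Idl g n) ^ M → r = 0 := by
      intro r hr
      rw [hM, Ideal.zero_eq_bot] at hr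
      exact (Submodule.mem_bot R).mp hr
    set F : PowerSeries R → PowerSeries R :=
      fun h' => h' - Phi g n (Psi g n b h') with hF
    have hcoeffmem : ∀ t m, PowerSeries.coeff m (F^[t] h) ∈ (Idl g n) ^ t := by
      intro t
      induction t with
      | zero =>
        intro m
        rw [pow_zero, Ideal.one_eq_top]
        exact Submodule.mem_top
      | succ t ih =>
        intro m
        rw [Function.iterate_succ_apply']
        exact residual_mem g n hn1 hN1 hN hb (F^[t] h) t ih m
    have hFM : F^[M] h = 0 := by
      ext m
      rw [map_zero]
      exact hMz _ (hcoeffmem M m)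
    set c : Fin n → PowerSeries R := ∑ t ∈ Finset.range M, Psi g n b (F^[t] h) with hc
    have hPhic : Phi g n c = h := by
      rw [hc, Phi_sum g n hN]
      have htel : ∀ t ∈ Finset.range M,
          Phi g n (Psi g n b (F^[t] h)) = F^[t] h - F^[t+1] h := by
        intro t _
        rw [Function.iterate_succ_apply', hF]
        ring
      rw [Finset.sum_congr rfl htel, Finset.sum_range_sub' (fun t => F^[t] h) M,
        Function.iterate_zero_apply, hFM, sub_zero]
    have hinj : ∀ c₁ c₂ : Fin n → PowerSeries R, Phi g n c₁ = Phi g n c₂ → c₁ = c₂ := by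
      intro c₁ c₂ hcc
      set d : Fin n → PowerSeries R := fun i => c₁ i - c₂ i with hd
      have hPhid : Phi g n d = 0 := by rw [hd, Phi_sub g n hN, hcc, sub_self]
      set y : ℕ → R := fun m' =>
        PowerSeries.coeff (m' / n) (d ⟨m' % n, Nat.mod_lt m' hn1⟩) with hy
      have hymem : ∀ t, ∀ m', y m' ∈ (Idl g n) ^ t := by
        intro t
        induction t with
        | zero =>
          intro m'
          rw [pow_zero, Ideal.one_eq_top]
          exact Submodule.mem_top
        | succ t ih =>
          intro m'
          induction m' using Nat.strong_induction_on with
          | _ m' ih2 =>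
            have heq : (0 : R) =
                ∑ k ∈ Finset.range (n * (m' + N)), y k * Adef g n m' k := by
              rw [← coeff_Phi g n hn1 hN1 hN d m', hPhid, map_zero]
            set K := n * (m' + N) with hK
            have hmK : m' + 1 ≤ K := by
              have := Nat.le_mul_of_pos_left (m' + N) hn1
              omega
            have heq2 : (∑ k ∈ Finset.range m', y k * Adef g n m' k) +
                y m' * Adef g n m' m' +
                ∑ k ∈ Finset.Ico (m' + 1) K, y k * Adef g n m' k = 0 := by
              rw [← Finset.sum_range_add_sum_Ico _ hmK, Finset.sum_range_succ] at heq
              linear_combination -heq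
            have key : (PowerSeries.coeff n g) ^ (m' / n) * y m' =
                y m' * ((PowerSeries.coeff n g) ^ (m' / n) - Adef g n m' m') -
                  (∑ k ∈ Finset.range m', y k * Adef g n m' k) -
                  ∑ k ∈ Finset.Ico (m' + 1) K, y k * Adef g n m' k := by
              linear_combination heq2
            have hmem : (PowerSeries.coeff n g) ^ (m' / n) * y m' ∈
                (Idl g n) ^ (t + 1) := by
              rw [key]
              apply Ideal.sub_mem
              apply Ideal.sub_mem
              · rw [pow_succ]
                apply Ideal.mul_mem_mul (ih m')
                have := (Idl g n).neg_mem (Adef_diag g n hn1 m')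
                rwa [neg_sub] at this
              · apply Ideal.sum_mem
                intro k hk
                exact Ideal.mul_mem_right _ _ (ih2 k (Finset.mem_range.mp hk))
              · rw [pow_succ]
                apply Ideal.sum_mem
                intro k hk
                rw [Finset.mem_Ico] at hk
                exact Ideal.mul_mem_mul (ih k) (Adef_off g n (by omega))
            have hrw : y m' = b ^ (m' / n) *
                ((PowerSeries.coeff n g) ^ (m' / n) * y m') := by
              rw [← mul_assoc, ← mul_pow, hb, one_pow, one_mul]
            rw [hrw]
            exact Ideal.mul_mem_left _ _ hmem
      have hy0 : ∀ m', y m' = 0 := fun m' => hMz _ (hymem M m')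
      funext i
      have hdi : d i = 0 := by
        ext j
        have hyv := hy0 (n * j + (i : ℕ))
        have h1 : (n * j + (i : ℕ)) % n = (i : ℕ) := by
          rw [Nat.mul_add_mod]; exact Nat.mod_eq_of_lt i.2
        have h2 : (n * j + (i : ℕ)) / n = j := by
          rw [Nat.mul_add_div hn1, Nat.div_eq_of_lt i.2, add_zero]
        rw [hy] at hyv
        simp only [h1, h2, Fin.eta] at hyv
        rw [map_zero, hyv]
      have := sub_eq_zero.mp hdi
      exact this
    refine ⟨c, hPhic.symm, ?_⟩
    intro c' hc'
    exact hinj c' c (hc'.symm.trans hPhic.symm)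
end

section
/- Let R be a commutative ring, n ∈ ℕ, and g ∈ R⟦X⟧ a power series whose constant coefficient is nilpotent, whose coefficient in each degree k < n is nilpotent, and whose coefficient in degree n is a unit. Then the quotient ring R⟦X⟧/(g) is a free R-module of rank n, with basis the images of 1, X, …, X^{n−1}. -/
set_option maxHeartbeats 1000000
set_option synthInstance.maxHeartbeats 400000

open PowerSeries

namespace WeierstrassAux

variable {R : Type*} [CommRing R]

lemma coeff_mul_mem {I J : Ideal R} {a b : PowerSeries R}
    (ha : ∀ k, PowerSeries.coeff k a ∈ I) (hb : ∀ k, PowerSeries.coeff k b ∈ J) (k : ℕ) :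
    PowerSeries.coeff k (a * b) ∈ I * J := by
  rw [PowerSeries.coeff_mul]
  exact Ideal.sum_mem _ fun p _ => Ideal.mul_mem_mul (ha p.1) (hb p.2)

/-- Split a power series into its part below degree `n` and `X^n` times its tail. -/
lemma split (n : ℕ) (G : PowerSeries R) :
    G = (PowerSeries.mk fun k => if k < n then PowerSeries.coeff k G else 0)
      + PowerSeries.X ^ n * (PowerSeries.mk fun k => PowerSeries.coeff (n + k) G) := by
  ext k
  rw [map_add, PowerSeries.coeff_X_pow_mul']
  rcases lt_or_ge k n with h | h
  · simp [h, not_le.mpr h]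
  · simp [not_lt.mpr h, h, Nat.add_sub_cancel' h]

lemma division_exists (n : ℕ) (N : Ideal R) (e : PowerSeries R)
    (he : ∀ k, PowerSeries.coeff k e ∈ N) (j : ℕ) (F : PowerSeries R) :
    ∃ q r G : PowerSeries R, (∀ k, n ≤ k → PowerSeries.coeff k r = 0) ∧
      (∀ k, PowerSeries.coeff k G ∈ N ^ j) ∧
      F = q * (PowerSeries.X ^ n + e) + r + G := by
  induction j with
  | zero => exact ⟨0, 0, F, by simp, fun k => by simp, by ring⟩
  | succ j ih =>
      obtain ⟨q, r, G, hr, hG, hF⟩ := ih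
      set DG : PowerSeries R := PowerSeries.mk fun k => PowerSeries.coeff (n + k) G with hDGdef
      have hDG : ∀ k, PowerSeries.coeff k DG ∈ N ^ j := fun k => by
        simpa [hDGdef] using hG (n + k)
      set trG : PowerSeries R :=
        PowerSeries.mk fun k => if k < n then PowerSeries.coeff k G else 0 with htrGdef
      have hsplit : G = trG + PowerSeries.X ^ n * DG := split n G
      refine ⟨q + DG, r + trG, -(DG * e), ?_, ?_, ?_⟩
      · intro k hk
        rw [map_add, hr k hk]
        simp [htrGdef, not_lt.mpr hk]
      · intro k
        rw [map_neg]
        apply neg_mem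
        rw [pow_succ]
        exact coeff_mul_mem hDG he k
      · have h2 : PowerSeries.X ^ n * DG
            = DG * (PowerSeries.X ^ n + e) - DG * e := by ring
        rw [hF, hsplit, h2]; ring

lemma division_unique (n : ℕ) (N : Ideal R) (e : PowerSeries R)
    (he : ∀ k, PowerSeries.coeff k e ∈ N) {q r : PowerSeries R}
    (hr : ∀ k, n ≤ k → PowerSeries.coeff k r = 0)
    (h0 : q * (PowerSeries.X ^ n + e) + r = 0) (j : ℕ) :
    ∀ k, PowerSeries.coeff k q ∈ N ^ j := by
  induction j with
  | zero => intro k; simp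
  | succ j ih =>
      intro k
      have h1 : q * PowerSeries.X ^ n + q * e + r = 0 := by rw [← h0]; ring
      have h2 := congrArg (PowerSeries.coeff (k + n)) h1
      rw [map_add, map_add, PowerSeries.coeff_mul_X_pow, hr (k + n) (Nat.le_add_left n k),
        add_zero, map_zero] at h2
      have h3 : PowerSeries.coeff k q = -(PowerSeries.coeff (k + n) (q * e)) := by
        rw [eq_neg_iff_add_eq_zero]; exact h2
      rw [h3]
      apply neg_mem
      rw [pow_succ]
      exact coeff_mul_mem ih he (k + n)

end WeierstrassAux

open WeierstrassAux in
theorem WeierstrassAux.main {R : Type*} [CommRing R] (n : ℕ) (g : PowerSeries R)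
    (hlt : ∀ k < n, IsNilpotent (PowerSeries.coeff k g))
    (hn : IsUnit (PowerSeries.coeff n g)) :
    ∃ b : Module.Basis (Fin n) R (PowerSeries R ⧸ Ideal.span {g}),
      ∀ i : Fin n, b i = Ideal.Quotient.mk (Ideal.span {g}) (PowerSeries.X ^ (i : ℕ)) := by
  classical
  -- tail of g, a unit power series
  set u : PowerSeries R := PowerSeries.mk fun k => PowerSeries.coeff (n + k) g with hu
  have hu_unit : IsUnit u := by
    rw [PowerSeries.isUnit_iff_constantCoeff]
    simpa [hu, PowerSeries.coeff_zero_eq_constantCoeff.symm] using hn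
  set w : PowerSeries R := ↑hu_unit.unit⁻¹ with hw
  have hwu : w * u = 1 := hu_unit.val_inv_mul
  -- low part of g
  set gl : PowerSeries R :=
    PowerSeries.mk fun k => if k < n then PowerSeries.coeff k g else 0 with hgl
  have hg_split : g = gl + PowerSeries.X ^ n * u := split n g
  set e : PowerSeries R := w * gl with hedef
  set f : PowerSeries R := PowerSeries.X ^ n + e with hfdef
  have hf : f = w * g := by
    rw [hg_split, mul_add, hfdef, hedef]
    have h1 : w * (PowerSeries.X ^ n * u) = PowerSeries.X ^ n * (w * u) := by ring
    rw [h1, hwu, mul_one, add_comm]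
  -- the nilpotent ideal of low coefficients
  set N : Ideal R :=
    Ideal.span ↑((Finset.range n).image fun k => PowerSeries.coeff k g) with hN
  have hNfg : N.FG := ⟨_, rfl⟩
  have hNrad : N ≤ (⊥ : Ideal R).radical := by
    rw [hN, Ideal.span_le]
    intro x hx
    simp only [Finset.coe_image, Set.mem_image, Finset.mem_coe, Finset.mem_range] at hx
    obtain ⟨k, hk, rfl⟩ := hx
    obtain ⟨m, hm⟩ := hlt k hk
    exact ⟨m, by simp [hm]⟩
  obtain ⟨M, hM⟩ := Ideal.exists_pow_le_of_le_radical_of_fg hNrad hNfg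
  have hM : N ^ M = ⊥ := le_bot_iff.mp hM
  -- coefficients of e lie in N
  have he : ∀ k, PowerSeries.coeff k e ∈ N := by
    intro k
    have hglN : ∀ k, PowerSeries.coeff k gl ∈ N := by
      intro k
      rw [hgl, PowerSeries.coeff_mk]
      split_ifs with h
      · exact Ideal.subset_span (by
          simp only [Finset.coe_image, Set.mem_image, Finset.mem_coe, Finset.mem_range]
          exact ⟨k, h, rfl⟩)
      · exact N.zero_mem
    have := coeff_mul_mem (I := (⊤ : Ideal R)) (J := N) (a := w) (b := gl)
      (fun _ => trivial) hglN k
    simpa [Ideal.top_mul] using this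
  -- ideals agree
  have hgf : g = u * f := by rw [hf, ← mul_assoc, mul_comm u w, hwu, one_mul]
  have hspan : Ideal.span {g} = Ideal.span {f} := le_antisymm
    (Ideal.span_singleton_le_span_singleton.mpr ⟨u, by rw [hgf]; ring⟩)
    (Ideal.span_singleton_le_span_singleton.mpr ⟨w, by rw [hf]; ring⟩)
  have hmem : ∀ P : PowerSeries R, P ∈ Ideal.span {g} ↔ ∃ q, P = q * f := by
    intro P
    rw [hspan, Ideal.mem_span_singleton]
    constructor
    · rintro ⟨c, rfl⟩; exact ⟨c, mul_comm f c⟩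
    · rintro ⟨q, rfl⟩; exact ⟨q, mul_comm q f⟩
  set pi : PowerSeries R →ₗ[R] PowerSeries R ⧸ Ideal.span {g} :=
    (Ideal.Quotient.mkₐ R (Ideal.span {g})).toLinearMap with hpidef
  have hpi : ∀ x, Ideal.Quotient.mk (Ideal.span {g}) x = pi x := fun _ => rfl
  -- linear independence
  have hli : LinearIndependent R
      (fun i : Fin n => Ideal.Quotient.mk (Ideal.span {g}) (PowerSeries.X ^ (i : ℕ))) := by
    rw [Fintype.linearIndependent_iff]
    intro c hc
    set P : PowerSeries R := ∑ i : Fin n, c i • PowerSeries.X ^ (i : ℕ) with hP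
    have hPcoeff : ∀ k, PowerSeries.coeff k P
        = if h : k < n then c ⟨k, h⟩ else 0 := by
      intro k
      rw [hP, map_sum]
      split_ifs with h
      · rw [Finset.sum_eq_single (⟨k, h⟩ : Fin n)]
        · simp [PowerSeries.coeff_X_pow]
        · intro j _ hj
          simp only [map_smul, PowerSeries.coeff_X_pow, smul_eq_mul]
          rw [if_neg, mul_zero]
          exact fun hkj => hj (by ext; simp [← hkj])
        · simp
      · apply Finset.sum_eq_zero
        intro j _
        simp only [map_smul, PowerSeries.coeff_X_pow, smul_eq_mul]
        rw [if_neg, mul_zero]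
        omega
    have hPI : P ∈ Ideal.span {g} := by
      rw [← Ideal.Quotient.eq_zero_iff_mem, hP, hpi, map_sum]
      simp only [map_smul]
      exact hc
    obtain ⟨q, hq⟩ := (hmem P).mp hPI
    have h0 : q * (PowerSeries.X ^ n + e) + (-P) = 0 := by
      rw [← hfdef, ← hq]; ring
    have hrP : ∀ k, n ≤ k → PowerSeries.coeff k (-P) = 0 := by
      intro k hk
      rw [map_neg, hPcoeff k, dif_neg (not_lt.mpr hk), neg_zero]
    have hq0 : ∀ k, PowerSeries.coeff k q ∈ N ^ M :=
      division_unique n N e he hrP h0 M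
    have hqz : q = 0 := by
      ext k
      have := hq0 k
      rw [hM] at this
      simpa using this
    intro i
    have : PowerSeries.coeff (i : ℕ) P = 0 := by rw [hq, hqz, zero_mul, map_zero]
    rwa [hPcoeff, dif_pos i.isLt, Fin.eta] at this
  -- spanning
  have hsp : ⊤ ≤ Submodule.span R
      (Set.range fun i : Fin n => Ideal.Quotient.mk (Ideal.span {g}) (PowerSeries.X ^ (i : ℕ))) := by
    rintro x -
    obtain ⟨F, rfl⟩ := Ideal.Quotient.mk_surjective x
    obtain ⟨q, r, G, hr, hG, hF⟩ := division_exists n N e he M F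
    have hGz : G = 0 := by
      ext k
      have := hG k
      rw [hM] at this
      simpa using this
    have hqfI : q * f ∈ Ideal.span {g} := (hmem _).mpr ⟨q, rfl⟩
    have hmkF : Ideal.Quotient.mk (Ideal.span {g}) F = Ideal.Quotient.mk (Ideal.span {g}) r := by
      rw [hF, hGz, add_zero, map_add, ← hfdef,
        Ideal.Quotient.eq_zero_iff_mem.mpr hqfI, zero_add]
    have hrsum : r = ∑ i : Fin n, PowerSeries.coeff (i : ℕ) r • PowerSeries.X ^ (i : ℕ) := by
      ext k
      rw [map_sum]
      rcases lt_or_ge k n with h | h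
      · rw [Finset.sum_eq_single (⟨k, h⟩ : Fin n)]
        · simp [PowerSeries.coeff_X_pow]
        · intro j _ hj
          simp only [map_smul, PowerSeries.coeff_X_pow, smul_eq_mul]
          rw [if_neg, mul_zero]
          exact fun hkj => hj (by ext; simp [← hkj])
        · simp
      · rw [hr k h]
        symm
        apply Finset.sum_eq_zero
        intro j _
        simp only [map_smul, PowerSeries.coeff_X_pow, smul_eq_mul]
        rw [if_neg, mul_zero]
        omega
    rw [hmkF, hrsum, hpi, map_sum]
    apply Submodule.sum_mem
    intro i _
    rw [map_smul]
    exact Submodule.smul_mem _ _ (Submodule.subset_span ⟨i, rfl⟩)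
  exact ⟨Module.Basis.mk hli hsp, fun i => Module.Basis.mk_apply hli hsp i⟩



/-- If `g ∈ R⟦X⟧` is a Weierstrass series of degree `n` (coefficients below degree `n`
nilpotent, degree-`n` coefficient a unit), then `R⟦X⟧/(g)` is free of rank `n` over `R`
with basis the images of `1, X, …, X^(n-1)`. -/
theorem weierstrass_quotient_free {R : Type*} [CommRing R] (n : ℕ) (g : PowerSeries R)
    (hlt : ∀ k < n, IsNilpotent (PowerSeries.coeff k g))
    (hn : IsUnit (PowerSeries.coeff n g)) :
    ∃ b : Module.Basis (Fin n) R (PowerSeries R ⧸ Ideal.span {g}),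
      ∀ i : Fin n, b i = Ideal.Quotient.mk (Ideal.span {g}) (PowerSeries.X ^ (i : ℕ)) := by
  exact WeierstrassAux.main n g hlt hn
end

section
/- Let R be a commutative ring and f = Σ_{k∈ℤ} a_k X^k a formal Laurent series over R (so a_k = 0 for all sufficiently negative k). Then f is a unit in the Laurent series ring R((X)) if and only if there exists a finitely supported family (e_k)_{k∈ℤ} of elements of R with e_i·e_j = 0 for i ≠ j, e_k² = e_k, and Σ_k e_k = 1, such that for every k: e_k·a_j is nilpotent for all j < k, and e_k·a_k is a unit of the ring e_k·R (i.e. there exists b ∈ R with a_k·b·e_k = e_k). -/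
open HahnSeries

section Aux

variable {R : Type*} [CommRing R]

private lemma aux_single_isNilpotent {j : ℤ} {c : R} (hc : IsNilpotent c) :
    IsNilpotent (HahnSeries.single j c : LaurentSeries R) := by
  obtain ⟨n, hn⟩ := hc
  exact ⟨n, by rw [HahnSeries.single_pow, hn, HahnSeries.single_eq_zero]⟩

private lemma aux_idem_nilpotent_eq_zero {x : R} (h1 : x * x = x) (h2 : IsNilpotent x) :
    x = 0 := by
  obtain ⟨n, hn⟩ := h2
  have hpow : ∀ n : ℕ, x ^ (n + 1) = x := by
    intro n
    induction n with
    | zero => simp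
    | succ n ih => rw [pow_succ, ih, h1]
  rcases n with _ | n
  · rw [pow_zero] at hn
    rw [← mul_one x, hn, mul_zero]
  · rw [hpow n] at hn
    exact hn

/-- Key coefficient computation: if `f * g = 1` and `q` is prime, then the least `k` with
`f.coeff k ∉ q` satisfies `f.coeff k * g.coeff (-k) ≡ 1 mod q`. -/
private lemma aux_laurent_key {f g : LaurentSeries R} (hfg : f * g = 1)
    (q : Ideal R) (hq : q.IsPrime) :
    ∃ k : ℤ, (∀ j < k, f.coeff j ∈ q) ∧ f.coeff k ∉ q ∧
      1 - f.coeff k * g.coeff (-k) ∈ q ∧ f.order ≤ k ∧ k ≤ -g.order := by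
  have hexf : ∃ i : ℤ, f.coeff i ∉ q := by
    by_contra h
    push_neg at h
    have h1 : (f * g).coeff 0 ∈ q := by
      rw [HahnSeries.coeff_mul]
      exact Ideal.sum_mem _ fun ij _ => q.mul_mem_right _ (h ij.1)
    rw [hfg] at h1
    simp only [HahnSeries.coeff_one, if_pos rfl] at h1
    exact hq.ne_top ((Ideal.eq_top_iff_one _).mpr h1)
  have hexg : ∃ i : ℤ, g.coeff i ∉ q := by
    by_contra h
    push_neg at h
    have h1 : (f * g).coeff 0 ∈ q := by
      rw [HahnSeries.coeff_mul]
      exact Ideal.sum_mem _ fun ij _ => q.mul_mem_left _ (h ij.2)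
    rw [hfg] at h1
    simp only [HahnSeries.coeff_one, if_pos rfl] at h1
    exact hq.ne_top ((Ideal.eq_top_iff_one _).mpr h1)
  obtain ⟨k, hk, hkmin⟩ := Int.exists_least_of_bdd
    (⟨f.order, fun z hz => HahnSeries.order_le_of_coeff_ne_zero
      (fun h0 => hz (h0 ▸ q.zero_mem))⟩ : ∃ b : ℤ, ∀ z : ℤ, f.coeff z ∉ q → b ≤ z) hexf
  obtain ⟨l, hl, hlmin⟩ := Int.exists_least_of_bdd
    (⟨g.order, fun z hz => HahnSeries.order_le_of_coeff_ne_zero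
      (fun h0 => hz (h0 ▸ q.zero_mem))⟩ : ∃ b : ℤ, ∀ z : ℤ, g.coeff z ∉ q → b ≤ z) hexg
  have hlow : ∀ j < k, f.coeff j ∈ q := fun j hj => by
    by_contra hc
    exact absurd (hkmin j hc) (not_le.mpr hj)
  have hlowg : ∀ j < l, g.coeff j ∈ q := fun j hj => by
    by_contra hc
    exact absurd (hlmin j hc) (not_le.mpr hj)
  have hfk : f.coeff k ≠ 0 := fun h0 => hk (h0 ▸ q.zero_mem)
  have hgl : g.coeff l ≠ 0 := fun h0 => hl (h0 ▸ q.zero_mem)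
  have hmem : ((k, l) : ℤ × ℤ) ∈
      Finset.addAntidiagonal f.isPWO_support g.isPWO_support (k + l) := by
    rw [Finset.addAntidiagonal, Finset.mem_addAntidiagonal]
    exact ⟨hfk, hgl, rfl⟩
  have hsum : (f * g).coeff (k + l) = f.coeff k * g.coeff l +
      ∑ ij ∈ (Finset.addAntidiagonal f.isPWO_support g.isPWO_support (k + l)).erase (k, l),
        f.coeff ij.1 * g.coeff ij.2 := by
    rw [HahnSeries.coeff_mul]; exact (Finset.add_sum_erase _ _ hmem).symm
  have hrest : ∑ ij ∈ (Finset.addAntidiagonal f.isPWO_support g.isPWO_support (k + l)).erase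
      (k, l), f.coeff ij.1 * g.coeff ij.2 ∈ q := by
    refine Ideal.sum_mem _ fun ij hij => ?_
    rw [Finset.mem_erase, Finset.addAntidiagonal, Finset.mem_addAntidiagonal] at hij
    obtain ⟨hne, _, _, h3⟩ := hij
    rcases lt_trichotomy ij.1 k with h | h | h
    · exact q.mul_mem_right _ (hlow _ h)
    · exact absurd (Prod.ext h (by omega)) hne
    · exact q.mul_mem_left _ (hlowg _ (by omega))
  have hkl : k + l = 0 := by
    by_contra h
    have h0 : (f * g).coeff (k + l) = 0 := by rw [hfg, HahnSeries.coeff_one, if_neg h]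
    have : f.coeff k * g.coeff l ∈ q := by
      have h2 : f.coeff k * g.coeff l = (f * g).coeff (k + l) -
          ∑ ij ∈ (Finset.addAntidiagonal f.isPWO_support g.isPWO_support (k + l)).erase (k, l),
            f.coeff ij.1 * g.coeff ij.2 := by rw [hsum]; ring
      rw [h2, h0, zero_sub]
      exact q.neg_mem hrest
    rcases hq.mem_or_mem this with h' | h'
    · exact hk h'
    · exact hl h'
  have hlk : l = -k := by omega
  subst hlk
  refine ⟨k, hlow, hk, ?_, HahnSeries.order_le_of_coeff_ne_zero hfk, ?_⟩
  · have h1 : (f * g).coeff (k + -k) = 1 := by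
      rw [hfg, HahnSeries.coeff_one, if_pos hkl]
    have h2 : 1 - f.coeff k * g.coeff (-k) =
        ∑ ij ∈ (Finset.addAntidiagonal f.isPWO_support g.isPWO_support (k + -k)).erase (k, -k),
          f.coeff ij.1 * g.coeff ij.2 := by
      rw [← h1, hsum]; ring
    rw [h2]
    exact hrest
  · have := HahnSeries.order_le_of_coeff_ne_zero hgl
    omega

end Aux

private lemma aux_forward {R : Type*} [CommRing R] [Nontrivial R] {f g : LaurentSeries R}
    (hfg : f * g = 1) :
    ∃ e : ℤ → R, (Function.support e).Finite ∧
      (∀ i j, i ≠ j → e i * e j = 0) ∧ (∀ k, e k * e k = e k) ∧ (∑ᶠ k, e k = 1) ∧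
      ∀ k : ℤ, (∀ j < k, IsNilpotent (e k * f.coeff j)) ∧
        ∃ b : R, f.coeff k * b * e k = e k := by
  classical
  set m := f.order with hm
  set n := -g.order with hn
  set S : ℤ → Set (PrimeSpectrum R) := fun k =>
    {p | (∀ j < k, f.coeff j ∈ p.asIdeal) ∧ f.coeff k ∉ p.asIdeal} with hSdef
  have hcover : ∀ p : PrimeSpectrum R, ∃ k ∈ Finset.Icc m n,
      p ∈ S k ∧ 1 - f.coeff k * g.coeff (-k) ∈ p.asIdeal := by
    intro p
    obtain ⟨k, h1, h2, h3, h4, h5⟩ := aux_laurent_key hfg p.asIdeal p.isPrime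
    exact ⟨k, Finset.mem_Icc.mpr ⟨h4, h5⟩, ⟨h1, h2⟩, h3⟩
  have huniq : ∀ p : PrimeSpectrum R, ∀ k k', p ∈ S k → p ∈ S k' → k = k' := by
    intro p k k' hk hk'
    by_contra h
    rcases lt_or_gt_of_ne h with h | h
    · exact hk.2 (hk'.1 _ h)
    · exact hk'.2 (hk.1 _ h)
  have hopen : ∀ k, IsOpen (S k) := by
    intro k
    rw [isOpen_iff_forall_mem_open]
    intro p hp
    have hnil : ∀ j ∈ Finset.Ico m k, ∃ s, s ∉ p.asIdeal ∧ ∃ N : ℕ, s * f.coeff j ^ N = 0 := by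
      intro j hj
      rw [Finset.mem_Ico] at hj
      have hnl : IsNilpotent (algebraMap R (Localization.AtPrime p.asIdeal) (f.coeff j)) := by
        rw [nilpotent_iff_mem_prime]
        intro Q hQ
        set q : Ideal R := Q.comap (algebraMap R (Localization.AtPrime p.asIdeal)) with hqdef
        haveI hqp' : q.IsPrime := Ideal.IsPrime.comap _
        have hqp : q ≤ p.asIdeal := by
          intro x hx
          by_contra hxp
          have hu : IsUnit (algebraMap R (Localization.AtPrime p.asIdeal) x) :=
            IsLocalization.map_units _ (⟨x, hxp⟩ : p.asIdeal.primeCompl)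
          exact hQ.ne_top (Q.eq_top_of_isUnit_mem hx hu)
        obtain ⟨kq, hq1, hq2, hq3, _, _⟩ := aux_laurent_key hfg q hqp'
        have hmemq : f.coeff j ∈ q := by
          by_cases hjk : j < kq
          · exact hq1 j hjk
          · exfalso
            push_neg at hjk
            have h1p : f.coeff kq ∈ p.asIdeal := hp.1 _ (lt_of_le_of_lt hjk hj.2)
            have h2p : 1 - f.coeff kq * g.coeff (-kq) ∈ p.asIdeal := hqp hq3
            have h3p : (1 : R) ∈ p.asIdeal := by
              have := p.asIdeal.add_mem h2p (p.asIdeal.mul_mem_right (g.coeff (-kq)) h1p)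
              simpa using this
            exact p.isPrime.ne_top ((Ideal.eq_top_iff_one _).mpr h3p)
        exact hmemq
      obtain ⟨N, hN⟩ := hnl
      rw [← map_pow] at hN
      obtain ⟨s, hs⟩ := (IsLocalization.map_eq_zero_iff p.asIdeal.primeCompl
        (Localization.AtPrime p.asIdeal) _).mp hN
      exact ⟨(s : R), s.2, N, hs⟩
    choose sfun hs1 Nfun hs2 using hnil
    set t : R := f.coeff k * ∏ j ∈ (Finset.Ico m k).attach, sfun j j.2 with ht
    have htp : t ∉ p.asIdeal := by
      intro hmemt
      rcases p.isPrime.mem_or_mem hmemt with h | h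
      · exact hp.2 h
      · haveI := p.isPrime
        obtain ⟨j, -, hj⟩ := Ideal.IsPrime.prod_mem_iff.mp h
        exact hs1 j j.2 hj
    refine ⟨↑(PrimeSpectrum.basicOpen t), ?_, (PrimeSpectrum.basicOpen t).isOpen, ?_⟩
    · intro q hq
      rw [SetLike.mem_coe, PrimeSpectrum.mem_basicOpen] at hq
      have hak : f.coeff k ∉ q.asIdeal := fun h => hq (Ideal.mul_mem_right _ _ h)
      refine ⟨?_, hak⟩
      intro j hj
      by_cases hjm : j < m
      · have h0 : f.coeff j = 0 := HahnSeries.coeff_eq_zero_of_lt_order hjm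
        rw [h0]; exact q.asIdeal.zero_mem
      · push_neg at hjm
        have hjIco : j ∈ Finset.Ico m k := Finset.mem_Ico.mpr ⟨hjm, hj⟩
        have hsj : sfun j hjIco ∉ q.asIdeal := by
          intro h
          apply hq
          apply Ideal.mul_mem_left
          obtain ⟨c, hc⟩ := Finset.dvd_prod_of_mem (fun j : {x // x ∈ Finset.Ico m k} =>
            sfun j j.2) (Finset.mem_attach _ ⟨j, hjIco⟩)
          rw [hc]
          exact Ideal.mul_mem_right _ _ h
        have h0 : sfun j hjIco * f.coeff j ^ Nfun j hjIco = 0 := hs2 j hjIco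
        have hpow : f.coeff j ^ Nfun j hjIco ∈ q.asIdeal := by
          have hz : sfun j hjIco * f.coeff j ^ Nfun j hjIco ∈ q.asIdeal := by
            rw [h0]; exact q.asIdeal.zero_mem
          rcases q.isPrime.mem_or_mem hz with h | h
          · exact absurd h hsj
          · exact h
        exact q.isPrime.mem_of_pow_mem _ hpow
    · rw [SetLike.mem_coe, PrimeSpectrum.mem_basicOpen]
      exact htp
  have hclosed : ∀ k, IsClosed (S k) := by
    intro k
    have hcompl : (S k)ᶜ = ⋃ k' ∈ ((Finset.Icc m n).erase k : Finset ℤ), S k' := by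
      ext p
      simp only [Set.mem_compl_iff, Set.mem_iUnion, exists_prop]
      constructor
      · intro hp
        obtain ⟨k', hk', hpk', -⟩ := hcover p
        have hne : k' ≠ k := fun h => hp (h ▸ hpk')
        exact ⟨k', Finset.mem_erase.mpr ⟨hne, hk'⟩, hpk'⟩
      · rintro ⟨k', hk', hpk'⟩ hpk
        exact (Finset.mem_erase.mp hk').1 (huniq p k' k hpk' hpk)
    rw [← isOpen_compl_iff, hcompl]
    exact isOpen_biUnion fun _ _ => hopen _
  have hclopen : ∀ k, ∃ ε : R, IsIdempotentElem ε ∧ S k = ↑(PrimeSpectrum.basicOpen ε) :=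
    fun k => PrimeSpectrum.exists_idempotent_basicOpen_eq_of_isClopen ⟨hclosed k, hopen k⟩
  choose ε hε1 hε2 using hclopen
  have hmemS : ∀ (p : PrimeSpectrum R) k, p ∈ S k ↔ ε k ∉ p.asIdeal := fun p k => by
    rw [hε2 k, SetLike.mem_coe, PrimeSpectrum.mem_basicOpen]
  set e : ℤ → R := fun k => if k ∈ Finset.Icc m n then ε k else 0 with hedef
  have hesupp : Function.support e ⊆ ↑(Finset.Icc m n) := by
    intro k hk
    rw [Finset.mem_coe]
    by_contra h
    refine (Function.mem_support.mp hk) ?_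
    simp only [hedef]
    rw [if_neg h]
  have horth : ∀ i j, i ≠ j → e i * e j = 0 := by
    intro i j hij
    by_cases hi : i ∈ Finset.Icc m n
    · by_cases hj : j ∈ Finset.Icc m n
      · simp only [hedef, if_pos hi, if_pos hj]
        apply aux_idem_nilpotent_eq_zero
        · have h1 := (hε1 i).eq
          have h2 := (hε1 j).eq
          calc ε i * ε j * (ε i * ε j) = (ε i * ε i) * (ε j * ε j) := by ring
            _ = ε i * ε j := by rw [h1, h2]
        · rw [nilpotent_iff_mem_prime]
          intro J hJ
          set p : PrimeSpectrum R := ⟨J, hJ⟩ with hp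
          by_cases h : ε i ∈ J
          · exact J.mul_mem_right _ h
          · by_cases h' : ε j ∈ J
            · exact J.mul_mem_left _ h'
            · exact absurd (huniq p i j ((hmemS p i).mpr h) ((hmemS p j).mpr h')) hij
      · simp only [hedef]
        rw [if_neg hj, mul_zero]
    · simp only [hedef]
      rw [if_neg hi, zero_mul]
  have hidem : ∀ k, e k * e k = e k := by
    intro k
    by_cases hk : k ∈ Finset.Icc m n
    · simp only [hedef, if_pos hk]; exact (hε1 k).eq
    · simp only [hedef]
      rw [if_neg hk, mul_zero]
  have hT : ∑ k ∈ Finset.Icc m n, e k = 1 := by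
    set T := ∑ k ∈ Finset.Icc m n, e k with hTdef
    have hTidem : T * T = T := by
      rw [hTdef, Finset.sum_mul_sum]
      exact Finset.sum_congr rfl fun i hi => by
        rw [Finset.sum_eq_single_of_mem i hi (fun j _ hji => horth i j (Ne.symm hji)), hidem i]
    have hTnil : IsNilpotent (1 - T) := by
      rw [nilpotent_iff_mem_prime]
      intro J hJ
      set p : PrimeSpectrum R := ⟨J, hJ⟩ with hp
      obtain ⟨k, hkIcc, hpk, -⟩ := hcover p
      have hek : ε k ∉ J := (hmemS p k).mp hpk
      have h1e : 1 - ε k ∈ J := by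
        have h0 : ε k * (1 - ε k) ∈ J := by
          have : ε k * (1 - ε k) = 0 := by
            have hee := (hε1 k).eq
            linear_combination -hee
          rw [this]; exact J.zero_mem
        rcases hJ.mem_or_mem h0 with h | h
        · exact absurd h hek
        · exact h
      have hrest : T - e k ∈ J := by
        have hTe : T - e k = ∑ j ∈ (Finset.Icc m n).erase k, e j := by
          rw [hTdef, ← Finset.add_sum_erase _ _ hkIcc]; ring
        rw [hTe]
        refine Ideal.sum_mem _ fun j hj => ?_
        rw [Finset.mem_erase] at hj
        have hj' : ε j ∈ J := by
          by_contra h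
          exact hj.1 (huniq p j k ((hmemS p j).mpr h) hpk)
        simp only [hedef, if_pos hj.2]
        exact hj'
      have hkey : (1 : R) - T = (1 - ε k) - (T - e k) := by
        simp only [hedef, if_pos hkIcc]; ring
      rw [hkey]
      exact J.sub_mem h1e hrest
    have h1T : (1 : R) - T = 0 := by
      apply aux_idem_nilpotent_eq_zero _ hTnil
      linear_combination hTidem
    exact (sub_eq_zero.mp h1T).symm
  refine ⟨e, Set.Finite.subset (Finset.Icc m n).finite_toSet hesupp, horth, hidem, ?_, ?_⟩
  · rw [finsum_eq_sum_of_support_subset e hesupp]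
    exact hT
  · intro k
    constructor
    · intro j hj
      by_cases hk : k ∈ Finset.Icc m n
      · rw [nilpotent_iff_mem_prime]
        intro J hJ
        set p : PrimeSpectrum R := ⟨J, hJ⟩ with hp
        simp only [hedef, if_pos hk]
        by_cases h : ε k ∈ J
        · exact J.mul_mem_right _ h
        · exact J.mul_mem_left _ (((hmemS p k).mpr h).1 j hj)
      · simp only [hedef, if_neg hk, zero_mul]
        exact IsNilpotent.zero
    · by_cases hk : k ∈ Finset.Icc m n
      · have hspan : Ideal.span {f.coeff k, 1 - ε k} = ⊤ := by
          by_contra h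
          obtain ⟨M, hM, hle⟩ := Ideal.exists_le_maximal _ h
          haveI := hM.isPrime
          set p : PrimeSpectrum R := ⟨M, hM.isPrime⟩ with hp
          have h1 : f.coeff k ∈ M := hle (Ideal.subset_span (by simp))
          have h2 : 1 - ε k ∈ M := hle (Ideal.subset_span (by simp))
          have h3 : ε k ∉ M := by
            intro h'
            have h4 : (1 : R) ∈ M := by
              have := M.add_mem h2 h'
              simpa using this
            exact hM.ne_top ((Ideal.eq_top_iff_one _).mpr h4)
          exact ((hmemS p k).mpr h3).2 h1
        obtain ⟨c, d, hcd⟩ := Ideal.mem_span_pair.mp ((Ideal.eq_top_iff_one _).mp hspan)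
        refine ⟨c, ?_⟩
        simp only [hedef, if_pos hk]
        have hee := (hε1 k).eq
        linear_combination (ε k) * hcd + d * hee
      · refine ⟨0, ?_⟩
        simp only [hedef]
        rw [if_neg hk, mul_zero]

/-- A formal Laurent series `f` over a commutative ring `R` is a unit if and only if
there is a finite system of orthogonal idempotents `e k` summing to `1` such that on
each piece `e k` the coefficients of `f` below degree `k` are nilpotent and the
coefficient in degree `k` is a unit of the ring `e k • R`. -/
theorem laurentSeries_isUnit_iff {R : Type*} [CommRing R] (f : LaurentSeries R) :
    IsUnit f ↔
      ∃ e : ℤ → R, (Function.support e).Finite ∧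
        (∀ i j, i ≠ j → e i * e j = 0) ∧ (∀ k, e k * e k = e k) ∧ (∑ᶠ k, e k = 1) ∧
        ∀ k : ℤ, (∀ j < k, IsNilpotent (e k * f.coeff j)) ∧
          ∃ b : R, f.coeff k * b * e k = e k := by
  constructor
  · intro hf
    rcases subsingleton_or_nontrivial R with h | h
    · refine ⟨fun k => if k = 0 then 1 else 0, ?_, ?_, ?_, ?_, ?_⟩
      · refine Set.Finite.subset (Set.finite_singleton 0) ?_
        intro k hk
        rw [Set.mem_singleton_iff]
        by_contra hk0
        exact (Function.mem_support.mp hk) (if_neg hk0)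
      · intro i j _
        exact Subsingleton.elim _ _
      · intro k
        exact Subsingleton.elim _ _
      · exact Subsingleton.elim _ _
      · intro k
        exact ⟨fun j _ => ⟨1, Subsingleton.elim _ _⟩, 0, Subsingleton.elim _ _⟩
    · obtain ⟨g, hg⟩ := isUnit_iff_exists_inv.mp hf
      exact aux_forward hg
  · rintro ⟨e, hfin, horth, hidem, hsum, hcond⟩
    rcases subsingleton_or_nontrivial R with h | h
    · haveI : Subsingleton (LaurentSeries R) :=
        ⟨fun a b => by ext z; exact Subsingleton.elim _ _⟩
      exact isUnit_of_subsingleton f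
    rw [isUnit_iff_exists_inv]
    have key : ∀ k : ℤ, ∃ hk : LaurentSeries R, f * hk = HahnSeries.C (e k) := by
      intro k
      obtain ⟨hnilp, b, hb⟩ := hcond k
      have hek : e k * e k = e k := hidem k
      set N : LaurentSeries R :=
        ∑ j ∈ Finset.Ico (f.order - k) 0, HahnSeries.single j (e k * f.coeff (j + k)) with hNdef
      set W : LaurentSeries R := HahnSeries.single (-k) 1 * (HahnSeries.C (e k) * f)
        + HahnSeries.C (1 - e k) with hWdef
      have hNnil : IsNilpotent N := by
        rw [hNdef]
        refine isNilpotent_sum fun j hj => ?_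
        rw [Finset.mem_Ico] at hj
        exact aux_single_isNilpotent (hnilp (j + k) (by omega))
      have hshift : ∀ (x : LaurentSeries R) (z : ℤ),
          (HahnSeries.single (-k) 1 * x).coeff z = x.coeff (z + k) := by
        intro x z
        have h1 := HahnSeries.coeff_single_mul_add (r := (1 : R)) (x := x) (a := z + k) (b := -k)
        rw [one_mul] at h1
        rw [← h1]
        congr 1
        ring
      have hC : ∀ (r : R) (x : LaurentSeries R) (z : ℤ),
          (HahnSeries.C r * x).coeff z = r * x.coeff z := by
        intro r x z
        rw [HahnSeries.C_apply, HahnSeries.coeff_single_zero_mul]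
      have hWcoeff : ∀ z : ℤ, W.coeff z = e k * f.coeff (z + k)
          + (if z = 0 then 1 - e k else 0) := by
        intro z
        rw [hWdef, HahnSeries.coeff_add, hshift, hC, HahnSeries.C_apply, HahnSeries.coeff_single]
        split_ifs <;> rfl
      have hNcoeff : ∀ z : ℤ, N.coeff z =
          if z ∈ Finset.Ico (f.order - k) 0 then e k * f.coeff (z + k) else 0 := by
        intro z
        rw [hNdef]
        rw [show (∑ j ∈ Finset.Ico (f.order - k) 0,
            HahnSeries.single j (e k * f.coeff (j + k))).coeff z
          = ∑ j ∈ Finset.Ico (f.order - k) 0,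
            (HahnSeries.single j (e k * f.coeff (j + k)) : LaurentSeries R).coeff z
          from map_sum (HahnSeries.coeff.addMonoidHom z) _ _]
        have hconv : (∑ x ∈ Finset.Ico (f.order - k) 0,
            (HahnSeries.single x (e k * f.coeff (x + k)) : LaurentSeries R).coeff z)
            = ∑ x ∈ Finset.Ico (f.order - k) 0, if z = x then e k * f.coeff (x + k) else 0 := by
          refine Finset.sum_congr rfl fun x _ => ?_
          rw [HahnSeries.coeff_single]
          split_ifs <;> rfl
        rw [hconv]
        by_cases hz : z ∈ Finset.Ico (f.order - k) 0
        · have h0 : ∀ x ∈ Finset.Ico (f.order - k) 0, x ≠ z →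
              (if z = x then e k * f.coeff (x + k) else 0) = 0 := by
            intro x _ hx
            exact if_neg fun hzz => hx hzz.symm
          rw [if_pos hz, Finset.sum_eq_single_of_mem z hz h0, if_pos rfl]
        · rw [if_neg hz, Finset.sum_eq_zero]
          intro x hx
          exact if_neg (fun hzz => hz (by rw [hzz]; exact hx))
      set V : LaurentSeries R := W - N with hVdef
      have hV0 : V.coeff 0 = e k * f.coeff k + (1 - e k) := by
        rw [hVdef, HahnSeries.coeff_sub, hWcoeff, hNcoeff]
        rw [if_pos rfl, if_neg (by simp [Finset.mem_Ico]), zero_add]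
        ring
      have hVneg : ∀ z : ℤ, z < 0 → V.coeff z = 0 := by
        intro z hz
        rw [hVdef, HahnSeries.coeff_sub, hWcoeff, hNcoeff, if_neg (by omega)]
        by_cases hzo : z ∈ Finset.Ico (f.order - k) 0
        · rw [if_pos hzo]
          ring
        · rw [if_neg hzo]
          rw [Finset.mem_Ico] at hzo
          have h0 : f.coeff (z + k) = 0 :=
            HahnSeries.coeff_eq_zero_of_lt_order (by omega)
          rw [h0]
          ring
      have hunit0 : IsUnit (V.coeff 0) := by
        rw [hV0]
        refine isUnit_iff_exists_inv.mpr ⟨b * e k + (1 - e k), ?_⟩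
        linear_combination (e k) * hb + (2 - f.coeff k - b) * hek
      have hVunit : IsUnit V := by
        set P : PowerSeries R := PowerSeries.mk fun n => V.coeff (n : ℤ) with hPdef
        have hVP : V = HahnSeries.ofPowerSeries ℤ R P := by
          ext z
          rcases lt_or_ge z 0 with hz | hz
          · rw [hVneg z hz, HahnSeries.ofPowerSeries_apply]
            symm
            apply HahnSeries.embDomain_notin_image_support
            rintro ⟨n, -, hn⟩
            change ((n : ℕ) : ℤ) = z at hn
            omega
          · have hzz : z = ((z.toNat : ℕ) : ℤ) := (Int.toNat_of_nonneg hz).symm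
            rw [hzz, HahnSeries.ofPowerSeries_apply_coeff, hPdef, PowerSeries.coeff_mk]
        have hPunit : IsUnit P := by
          rw [PowerSeries.isUnit_iff_constantCoeff]
          have hc : PowerSeries.constantCoeff P = V.coeff 0 := by
            rw [hPdef, PowerSeries.constantCoeff_mk]
            norm_num
          rw [hc]
          exact hunit0
        rw [hVP]
        exact hPunit.map _
      have hWunit : IsUnit W := by
        have hWV : W = V + N := by
          rw [hVdef]
          ring
        rw [hWV]
        exact hNnil.isUnit_add_left_of_commute hVunit (Commute.all _ _)
      obtain ⟨G, hG⟩ := isUnit_iff_exists_inv.mp hWunit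
      refine ⟨HahnSeries.C (e k) * G * HahnSeries.single (-k) 1, ?_⟩
      have hCC : HahnSeries.C (e k) * HahnSeries.C (1 - e k) = (0 : LaurentSeries R) := by
        rw [← map_mul]
        have h0 : e k * (1 - e k) = 0 := by linear_combination -hek
        rw [h0, map_zero]
      have hCC2 : HahnSeries.C (e k) * HahnSeries.C (e k)
          = (HahnSeries.C (e k) : LaurentSeries R) := by
        rw [← map_mul, hek]
      have hEW : HahnSeries.C (e k) * W
          = HahnSeries.single (-k) 1 * (HahnSeries.C (e k) * f) := by
        rw [hWdef, mul_add, hCC, add_zero]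
        linear_combination (HahnSeries.single (-k) 1 * f) * hCC2
      calc f * (HahnSeries.C (e k) * G * HahnSeries.single (-k) 1)
          = (HahnSeries.single (-k) 1 * (HahnSeries.C (e k) * f)) * G := by ring
        _ = (HahnSeries.C (e k) * W) * G := by rw [hEW]
        _ = HahnSeries.C (e k) * (W * G) := by ring
        _ = HahnSeries.C (e k) := by rw [hG, mul_one]
    choose hfun hh using key
    refine ⟨∑ k ∈ hfin.toFinset, hfun k, ?_⟩
    rw [Finset.mul_sum]
    rw [Finset.sum_congr rfl fun k _ => hh k]
    rw [← map_sum]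
    have hs1 : ∑ k ∈ hfin.toFinset, e k = 1 := by
      rw [← finsum_eq_sum e hfin]
      exact hsum
    rw [hs1, map_one]
end

section
/- Let R be a commutative ring, k ∈ ℤ, and f = Σ_{j∈ℤ} a_j X^j a formal Laurent series over R such that a_j is nilpotent for all j < k and a_k is a unit of R. Then there is a unique pair (u, g) where u is an invertible formal power series in R⟦X⟧ and g = Σ_{j≤0} b_j X^j is a Laurent series supported in degrees ≤ 0 with b_0 = 1, b_j nilpotent for all j < 0, and b_j = 0 for all but finitely many j, such that f = X^k · u · g in R((X)). -/
namespace LaurentFact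

variable {R : Type*} [CommRing R]

lemma ofPS_coeff_neg (p : PowerSeries R) {j : ℤ} (hj : j < 0) :
    (HahnSeries.ofPowerSeries ℤ R p).coeff j = 0 := by
  rw [HahnSeries.ofPowerSeries_apply, HahnSeries.embDomain_notin_range]
  rintro ⟨n, hn⟩
  simp only [Nat.castOrderEmbedding_apply] at hn
  omega

lemma ofPS_coeff_nonneg (p : PowerSeries R) {j : ℤ} (hj : 0 ≤ j) :
    (HahnSeries.ofPowerSeries ℤ R p).coeff j = PowerSeries.coeff j.toNat p := by
  have h : j = ((j.toNat : ℕ) : ℤ) := (Int.toNat_of_nonneg hj).symm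
  conv_lhs => rw [h]
  rw [HahnSeries.ofPowerSeries_apply_coeff]

/-- the strictly negative part of a Laurent series -/
def negPart (x : LaurentSeries R) : LaurentSeries R where
  coeff j := if j < 0 then x.coeff j else 0
  isPWO_support' := x.isPWO_support'.mono (fun j hj => by
    simp only [Function.mem_support] at hj ⊢
    intro h
    apply hj
    split_ifs
    · exact h
    · rfl)

@[simp] lemma negPart_coeff (x : LaurentSeries R) (j : ℤ) :
    (negPart x).coeff j = if j < 0 then x.coeff j else 0 := rfl

/-- the nonnegative part of a Laurent series, as a power series -/
def posPart (x : LaurentSeries R) : PowerSeries R := PowerSeries.mk fun n => x.coeff n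

lemma posPart_coeff (x : LaurentSeries R) (n : ℕ) :
    PowerSeries.coeff n (posPart x) = x.coeff n := PowerSeries.coeff_mk _ _

lemma decomp (x : LaurentSeries R) :
    x = HahnSeries.ofPowerSeries ℤ R (posPart x) + negPart x := by
  ext j
  rw [HahnSeries.coeff_add]
  by_cases h : j < 0
  · rw [ofPS_coeff_neg _ h, negPart_coeff, if_pos h, zero_add]
  · rw [ofPS_coeff_nonneg _ (not_lt.1 h), negPart_coeff, if_neg h, add_zero, posPart_coeff]
    congr 1
    exact (Int.toNat_of_nonneg (not_lt.1 h)).symm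

lemma coeff_mul_mem_right (J : Ideal R) {y : LaurentSeries R} (hy : ∀ j, y.coeff j ∈ J)
    (x : LaurentSeries R) (j : ℤ) : (x * y).coeff j ∈ J := by
  rw [HahnSeries.coeff_mul]
  exact Ideal.sum_mem _ fun ij _ => J.mul_mem_left _ (hy ij.2)

lemma coeff_mul_mem_mul {I J : Ideal R} {x y : LaurentSeries R} (hx : ∀ j, x.coeff j ∈ I)
    (hy : ∀ j, y.coeff j ∈ J) (j : ℤ) : (x * y).coeff j ∈ I * J := by
  rw [HahnSeries.coeff_mul]
  exact Ideal.sum_mem _ fun ij _ => Ideal.mul_mem_mul (hx ij.1) (hy ij.2)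

lemma mul_coeff_zero_le_le {x y : LaurentSeries R} (hx : ∀ i, 0 < i → x.coeff i = 0)
    (hy : ∀ i, 0 < i → y.coeff i = 0) {j : ℤ} (hj : 0 < j) : (x * y).coeff j = 0 := by
  rw [HahnSeries.coeff_mul]
  refine Finset.sum_eq_zero fun ij hij => ?_
  rw [Finset.mem_addAntidiagonal] at hij
  rcases lt_or_ge 0 ij.1 with h | h
  · rw [hx _ h, zero_mul]
  · rw [hy _ (by omega), mul_zero]

lemma mul_coeff_zero_le_lt {x y : LaurentSeries R} (hx : ∀ i, 0 < i → x.coeff i = 0)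
    (hy : ∀ i, 0 ≤ i → y.coeff i = 0) {j : ℤ} (hj : 0 ≤ j) : (x * y).coeff j = 0 := by
  rw [HahnSeries.coeff_mul]
  refine Finset.sum_eq_zero fun ij hij => ?_
  rw [Finset.mem_addAntidiagonal] at hij
  rcases lt_or_ge 0 ij.1 with h | h
  · rw [hx _ h, zero_mul]
  · rw [hy _ (by omega), mul_zero]

lemma negSupport_finite (x : LaurentSeries R) : {j : ℤ | j < 0 ∧ x.coeff j ≠ 0}.Finite := by
  by_cases hx : x = 0
  · subst hx
    simp only [HahnSeries.coeff_zero, ne_eq, not_true_eq_false, and_false]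
    exact Set.finite_empty
  · apply Set.Finite.subset (Set.finite_Ico x.order 0)
    rintro j ⟨h1, h2⟩
    exact ⟨le_of_not_gt fun h => h2 (HahnSeries.coeff_eq_zero_of_lt_order h), h1⟩

lemma negPart_support_finite (x : LaurentSeries R) : (negPart x).support.Finite := by
  apply (negSupport_finite x).subset
  intro j hj
  rw [HahnSeries.mem_support, negPart_coeff] at hj
  by_cases h : j < 0
  · rw [if_pos h] at hj; exact ⟨h, hj⟩
  · rw [if_neg h] at hj; exact absurd rfl hj

lemma pow_coeff_mem (J : Ideal R) {x : LaurentSeries R} (hx : ∀ j, x.coeff j ∈ J) :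
    ∀ m : ℕ, ∀ j : ℤ, (x ^ (m + 1)).coeff j ∈ J ^ (m + 1) := by
  intro m
  induction m with
  | zero => intro j; simpa using hx j
  | succ m ih =>
    intro j
    rw [pow_succ, pow_succ]
    exact coeff_mul_mem_mul ih hx j

lemma nilpotent_of_finite {x : LaurentSeries R} (hfin : x.support.Finite)
    (hx : ∀ j, IsNilpotent (x.coeff j)) : ∃ n : ℕ, x ^ (n + 1) = 0 := by
  set J : Ideal R := Ideal.span (x.coeff '' x.support) with hJ
  have hle : J ≤ nilradical R := Ideal.span_le.2 (by rintro r ⟨j, _, rfl⟩; exact hx j)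
  have hfg : J.FG := Submodule.fg_span (hfin.image _)
  obtain ⟨n, hn⟩ := Ideal.exists_pow_le_of_le_radical_of_fg (J := (0 : Ideal R)) hle hfg
  have hcoe : ∀ j, x.coeff j ∈ J := fun j => by
    by_cases h : x.coeff j = 0
    · rw [h]; exact J.zero_mem
    · exact Ideal.subset_span ⟨j, h, rfl⟩
  refine ⟨n, ?_⟩
  ext j
  have h1 := pow_coeff_mem J hcoe n j
  have h2 : J ^ (n + 1) ≤ 0 := le_trans (Ideal.pow_le_pow_right (by omega)) hn
  simpa using h2 h1

lemma exists_inv {c : LaurentSeries R} (hc : ∀ j, 0 ≤ j → c.coeff j = 0) {n : ℕ}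
    (hcn : c ^ (n + 1) = 0) :
    ∃ v : LaurentSeries R, (1 + c) * v = 1 ∧ (∀ j, 0 < j → v.coeff j = 0) ∧ v.coeff 0 = 1 := by
  have hpow : ∀ i : ℕ, 1 ≤ i → ∀ j : ℤ, 0 ≤ j → ((-c) ^ i).coeff j = 0 := by
    intro i hi
    induction i with
    | zero => omega
    | succ i ih =>
      intro j hj
      by_cases h0 : i = 0
      · subst h0
        rw [pow_one, HahnSeries.coeff_neg, hc j hj, neg_zero]
      · rw [pow_succ]
        exact mul_coeff_zero_le_lt (fun i' hi' => ih (by omega) i' (le_of_lt hi'))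
          (fun i' h' => by rw [HahnSeries.coeff_neg, hc i' h', neg_zero]) hj
  refine ⟨∑ i ∈ Finset.range (n + 1), (-c) ^ i, ?_, ?_, ?_⟩
  · have h := geom_sum_mul (-c) (n + 1)
    have h2 : (-c) ^ (n + 1) = 0 := by
      have h3 : (-c) ^ (n + 1) = (-1 : LaurentSeries R) ^ (n + 1) * c ^ (n + 1) := by ring
      rw [h3, hcn, mul_zero]
    rw [h2, zero_sub] at h
    linear_combination -h
  · intro j hj
    have hv : ((∑ i ∈ Finset.range (n + 1), (-c) ^ i : LaurentSeries R)).coeff j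
        = ∑ i ∈ Finset.range (n + 1), ((-c) ^ i).coeff j :=
      map_sum (HahnSeries.coeff.addMonoidHom j) _ _
    rw [hv]
    refine Finset.sum_eq_zero fun i _ => ?_
    by_cases h0 : i = 0
    · subst h0
      rw [pow_zero, HahnSeries.coeff_one, if_neg (by omega)]
    · exact hpow i (by omega) j (le_of_lt hj)
  · have hv : ((∑ i ∈ Finset.range (n + 1), (-c) ^ i : LaurentSeries R)).coeff 0
        = ∑ i ∈ Finset.range (n + 1), ((-c) ^ i).coeff 0 :=
      map_sum (HahnSeries.coeff.addMonoidHom 0) _ _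
    rw [hv]
    rw [Finset.sum_eq_single 0]
    · rw [pow_zero, HahnSeries.coeff_one, if_pos rfl]
    · intro i _ hi
      exact hpow i (by omega) 0 le_rfl
    · intro h
      exact absurd (Finset.mem_range.2 (by omega)) h

lemma key (m : ℕ) : ∀ (J : Ideal R) (h : LaurentSeries R), J ^ (m + 1) = ⊥ →
    (∀ j, j < 0 → h.coeff j ∈ J) → IsUnit (h.coeff 0) →
    ∃ (u : PowerSeries R) (g : LaurentSeries R), IsUnit u ∧ (∀ j, 0 < j → g.coeff j = 0) ∧
      g.coeff 0 = 1 ∧ (∀ j, j < 0 → g.coeff j ∈ J) ∧ g.support.Finite ∧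
      h = HahnSeries.ofPowerSeries ℤ R u * g := by
  induction m with
  | zero =>
    intro J h hJ hneg h0
    rw [pow_one] at hJ
    subst hJ
    have hzero : ∀ j : ℤ, j < 0 → h.coeff j = 0 := fun j hj => by
      simpa using hneg j hj
    have hh : h = HahnSeries.ofPowerSeries ℤ R (posPart h) := by
      have hnp : negPart h = 0 := by
        ext j
        rw [negPart_coeff]
        split_ifs with hj
        · exact hzero j hj
        · rfl
      conv_lhs => rw [decomp h]
      rw [hnp, add_zero]
    refine ⟨posPart h, 1, ?_, ?_, ?_, ?_, ?_, ?_⟩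
    · rw [PowerSeries.isUnit_iff_constantCoeff]
      have : PowerSeries.constantCoeff (posPart h) = h.coeff 0 := by
        rw [← PowerSeries.coeff_zero_eq_constantCoeff_apply]
        simpa using posPart_coeff h 0
      rw [this]; exact h0
    · intro j hj
      rw [HahnSeries.coeff_one, if_neg (by omega)]
    · rw [HahnSeries.coeff_one, if_pos rfl]
    · intro j hj
      rw [HahnSeries.coeff_one, if_neg (by omega)]
      exact Ideal.zero_mem _
    · exact (Set.finite_singleton (0 : ℤ)).subset HahnSeries.support_single_subset
    · rw [mul_one]; exact hh
  | succ m ih =>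
    intro J h hJ hneg h0
    -- every element of J is nilpotent
    have hJnil : ∀ r ∈ J, IsNilpotent r := fun r hr =>
      ⟨m + 1 + 1, by
        have : r ^ (m + 1 + 1) ∈ J ^ (m + 1 + 1) := Ideal.pow_mem_pow hr _
        rwa [hJ, Ideal.mem_bot] at this⟩
    set a : PowerSeries R := posPart h with ha
    have ha0 : PowerSeries.constantCoeff a = h.coeff 0 := by
      rw [← PowerSeries.coeff_zero_eq_constantCoeff_apply]
      simpa using posPart_coeff h 0
    have haU : IsUnit a := by rw [PowerSeries.isUnit_iff_constantCoeff, ha0]; exact h0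
    obtain ⟨A, hA⟩ := haU
    set b : LaurentSeries R := negPart h with hb
    have hbJ : ∀ j, b.coeff j ∈ J := fun j => by
      rw [hb, negPart_coeff]
      split_ifs with hj
      · exact hneg j hj
      · exact Ideal.zero_mem _
    set z : LaurentSeries R := HahnSeries.ofPowerSeries ℤ R (↑A⁻¹ : PowerSeries R) * b with hz
    set c : LaurentSeries R := negPart z with hc
    have hcJ : ∀ j, c.coeff j ∈ J := fun j => by
      rw [hc, negPart_coeff]
      split_ifs with hj
      · rw [hz]
        exact coeff_mul_mem_right J hbJ _ j
      · exact Ideal.zero_mem _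
    have hcneg : ∀ j, 0 ≤ j → c.coeff j = 0 := fun j hj => by
      rw [hc, negPart_coeff, if_neg (by omega)]
    have hcfin : c.support.Finite := negPart_support_finite z
    have hcnil : c ^ (m + 1 + 1) = 0 := by
      ext j
      have h1 := pow_coeff_mem J hcJ (m + 1) j
      rw [hJ] at h1
      simpa using h1
    obtain ⟨v, hv1, hvpos, hv0⟩ := exists_inv hcneg (n := m + 1) hcnil
    set h₁ : LaurentSeries R := h * v with hh₁
    have hF1 : h₁ * (1 + c) = h := by
      rw [hh₁]
      calc h * v * (1 + c) = h * ((1 + c) * v) := by ring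
      _ = h := by rw [hv1, mul_one]
    have hF2 : h₁ = h - h₁ * c := by
      have h2 := hF1
      rw [mul_add, mul_one] at h2
      linear_combination h2
    have hdec : h - HahnSeries.ofPowerSeries ℤ R a = b := by
      conv_lhs => rw [decomp h]
      rw [← ha, ← hb]
      ring
    have hF3 : ∀ j, (h₁ - HahnSeries.ofPowerSeries ℤ R a).coeff j ∈ J := by
      intro j
      have e : h₁ - HahnSeries.ofPowerSeries ℤ R a = b - h₁ * c := by
        rw [← hdec]
        linear_combination hF2
      rw [e, HahnSeries.coeff_sub]
      exact Ideal.sub_mem _ (hbJ j) (coeff_mul_mem_right J hcJ _ j)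
    have hJ2 : (J * J) ^ (m + 1) = ⊥ := by
      rw [← pow_two, ← pow_mul]
      have hle : J ^ (2 * (m + 1)) ≤ J ^ (m + 1 + 1) := Ideal.pow_le_pow_right (by omega)
      rw [hJ] at hle
      exact le_bot_iff.mp hle
    have hF4 : ∀ j, j < 0 → h₁.coeff j ∈ J * J := by
      intro j hj
      have hac : (HahnSeries.ofPowerSeries ℤ R a * c).coeff j = h.coeff j := by
        have hzdec : c = z - HahnSeries.ofPowerSeries ℤ R (posPart z) := by
          rw [hc]
          linear_combination -decomp z
        have h1 : HahnSeries.ofPowerSeries ℤ R a * z = b := by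
          rw [hz, ← mul_assoc, ← map_mul, ← hA, Units.mul_inv, map_one, one_mul]
        rw [hzdec, mul_sub, h1, HahnSeries.coeff_sub, ← map_mul, ofPS_coeff_neg _ hj, sub_zero,
          hb, negPart_coeff, if_pos hj]
      have hsplit : h₁ * c = HahnSeries.ofPowerSeries ℤ R a * c
          + (h₁ - HahnSeries.ofPowerSeries ℤ R a) * c := by ring
      have e1 := congrArg (fun w : LaurentSeries R => w.coeff j) hF2
      simp only [HahnSeries.coeff_sub] at e1
      have e2 := congrArg (fun w : LaurentSeries R => w.coeff j) hsplit
      simp only [HahnSeries.coeff_add] at e2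
      have e3 : h₁.coeff j = -(((h₁ - HahnSeries.ofPowerSeries ℤ R a) * c).coeff j) := by
        rw [e1, e2, hac]; ring
      rw [e3]
      exact neg_mem (coeff_mul_mem_mul hF3 hcJ j)
    have hF5 : IsUnit (h₁.coeff 0) := by
      have e1 := congrArg (fun w : LaurentSeries R => w.coeff 0) hF2
      simp only [HahnSeries.coeff_sub] at e1
      have hnil : IsNilpotent (-((h₁ * c).coeff 0)) :=
        (hJnil _ (coeff_mul_mem_right J hcJ _ 0)).neg
      rw [e1, sub_eq_add_neg]
      exact hnil.isUnit_add_left_of_commute h0 (Commute.all _ _)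
    obtain ⟨u', g', hu', hg'pos, hg'0, hg'J2, hg'fin, hfac⟩ := ih (J * J) h₁ hJ2 hF4 hF5
    have h1c_pos : ∀ i : ℤ, 0 < i → (1 + c).coeff i = 0 := by
      intro i hi
      rw [HahnSeries.coeff_add, HahnSeries.coeff_one, if_neg (by omega), hcneg i (le_of_lt hi),
        add_zero]
    have hgdef : g' * (1 + c) = g' + g' * c := by ring
    refine ⟨u', g' * (1 + c), hu', ?_, ?_, ?_, ?_, ?_⟩
    · intro j hj
      exact mul_coeff_zero_le_le hg'pos h1c_pos hj
    · rw [hgdef, HahnSeries.coeff_add, hg'0, mul_coeff_zero_le_lt hg'pos hcneg le_rfl, add_zero]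
    · intro j hj
      rw [hgdef, HahnSeries.coeff_add]
      exact Ideal.add_mem _ (Ideal.mul_le_left (hg'J2 j hj)) (coeff_mul_mem_right J hcJ _ j)
    · rw [hgdef]
      refine Set.Finite.subset (Set.Finite.union hg'fin (Set.Finite.add hg'fin hcfin)) ?_
      refine subset_trans (HahnSeries.support_add_subset _ _) ?_
      exact Set.union_subset_union (subset_refl _) HahnSeries.support_mul_subset
    · rw [← hF1, hfac]
      ring

/-- Uniqueness part. -/
lemma uniq {u₁ u₂ : PowerSeries R} {g₁ g₂ : LaurentSeries R}
    (hu₂ : IsUnit u₂)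
    (hg₁pos : ∀ j : ℤ, 0 < j → g₁.coeff j = 0) (hg₁0 : g₁.coeff 0 = 1)
    (hg₁nil : ∀ j : ℤ, j < 0 → IsNilpotent (g₁.coeff j)) (hg₁fin : g₁.support.Finite)
    (hg₂pos : ∀ j : ℤ, 0 < j → g₂.coeff j = 0) (hg₂0 : g₂.coeff 0 = 1)
    (heq : HahnSeries.ofPowerSeries ℤ R u₁ * g₁ = HahnSeries.ofPowerSeries ℤ R u₂ * g₂) :
    u₁ = u₂ ∧ g₁ = g₂ := by
  set c₁ : LaurentSeries R := g₁ - 1 with hc₁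
  have hc₁neg : ∀ j : ℤ, 0 ≤ j → c₁.coeff j = 0 := by
    intro j hj
    rw [hc₁, HahnSeries.coeff_sub, HahnSeries.coeff_one]
    rcases eq_or_lt_of_le hj with h | h
    · rw [← h, hg₁0, if_pos rfl, sub_self]
    · rw [hg₁pos j h, if_neg (by omega), sub_zero]
  have hc₁nilc : ∀ j, IsNilpotent (c₁.coeff j) := by
    intro j
    rcases lt_or_ge j 0 with h | h
    · rw [hc₁, HahnSeries.coeff_sub, HahnSeries.coeff_one, if_neg (by omega), sub_zero]
      exact hg₁nil j h
    · rw [hc₁neg j h]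
      exact IsNilpotent.zero
  have hc₁fin : c₁.support.Finite := by
    have : c₁ = g₁ + (-1) := by rw [hc₁]; ring
    rw [this]
    refine Set.Finite.subset (Set.Finite.union hg₁fin
      ((Set.finite_singleton (0 : ℤ)).subset ?_)) (HahnSeries.support_add_subset _ _)
    intro j hj
    rw [HahnSeries.mem_support, HahnSeries.coeff_neg, HahnSeries.coeff_one] at hj
    simp only [Set.mem_singleton_iff]
    by_contra hne
    rw [if_neg hne, neg_zero] at hj
    exact hj rfl
  obtain ⟨n, hn⟩ := nilpotent_of_finite hc₁fin hc₁nilc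
  obtain ⟨v, hv1, hvpos, hv0⟩ := exists_inv hc₁neg hn
  have hg₁v : g₁ * v = 1 := by
    have : (1 : LaurentSeries R) + c₁ = g₁ := by rw [hc₁]; ring
    rw [← this]; exact hv1
  have hs : HahnSeries.ofPowerSeries ℤ R u₁ = HahnSeries.ofPowerSeries ℤ R u₂ * (g₂ * v) := by
    calc HahnSeries.ofPowerSeries ℤ R u₁
        = HahnSeries.ofPowerSeries ℤ R u₁ * g₁ * v := by rw [mul_assoc, hg₁v, mul_one]
      _ = HahnSeries.ofPowerSeries ℤ R u₂ * (g₂ * v) := by rw [heq, mul_assoc]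
  set s : LaurentSeries R := g₂ * v with hsdef
  have hspos : ∀ j : ℤ, 0 < j → s.coeff j = 0 := fun j hj =>
    mul_coeff_zero_le_le hg₂pos hvpos hj
  have hs0 : s.coeff 0 = 1 := by
    have hc₂ : g₂ = 1 + (g₂ - 1) := by ring
    have hgv : s = v + (g₂ - 1) * v := by rw [hsdef]; ring
    have hneg : ∀ i : ℤ, 0 ≤ i → (g₂ - 1).coeff i = 0 := by
      intro i hi
      rw [HahnSeries.coeff_sub, HahnSeries.coeff_one]
      rcases eq_or_lt_of_le hi with h | h
      · rw [← h, hg₂0, if_pos rfl, sub_self]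
      · rw [hg₂pos i h, if_neg (by omega), sub_zero]
    rw [hgv, HahnSeries.coeff_add, hv0, mul_comm,
      mul_coeff_zero_le_lt hvpos hneg le_rfl, add_zero]
  set t : LaurentSeries R := s - 1 with ht
  have htneg : ∀ j : ℤ, 0 ≤ j → t.coeff j = 0 := by
    intro j hj
    rw [ht, HahnSeries.coeff_sub, HahnSeries.coeff_one]
    rcases eq_or_lt_of_le hj with h | h
    · rw [← h, hs0, if_pos rfl, sub_self]
    · rw [hspos j h, if_neg (by omega), sub_zero]
  have ht0 : t = 0 := by
    by_contra hne
    set j₀ : ℤ := t.order with hj₀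
    have hj₀coeff : t.coeff j₀ ≠ 0 := fun h0 => hne (HahnSeries.coeff_order_eq_zero.mp h0)
    have hj₀neg : j₀ < 0 := by
      by_contra hge
      exact hj₀coeff (htneg j₀ (by omega))
    have hmul : (HahnSeries.ofPowerSeries ℤ R u₂ * t).coeff j₀ = 0 := by
      have e : HahnSeries.ofPowerSeries ℤ R u₂ * t
          = HahnSeries.ofPowerSeries ℤ R u₁ - HahnSeries.ofPowerSeries ℤ R u₂ := by
        rw [hs]
        have hst : s = 1 + t := by rw [ht]; ring
        rw [hst]
        ring
      rw [e, HahnSeries.coeff_sub, ofPS_coeff_neg _ hj₀neg, ofPS_coeff_neg _ hj₀neg, sub_self]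
    have hsum : (HahnSeries.ofPowerSeries ℤ R u₂ * t).coeff j₀
        = (HahnSeries.ofPowerSeries ℤ R u₂).coeff 0 * t.coeff j₀ := by
      rw [HahnSeries.coeff_mul]
      rw [Finset.sum_eq_single ((0 : ℤ), j₀)]
      · intro ij hij hne'
        rw [Finset.mem_addAntidiagonal] at hij
        obtain ⟨hij1, hij2, hij3⟩ := hij
        have h1 : 0 ≤ ij.1 := by
          by_contra hlt
          exact hij1 (ofPS_coeff_neg _ (by omega))
        have h2 : j₀ ≤ ij.2 := by
          by_contra hlt
          exact hij2 (HahnSeries.coeff_eq_zero_of_lt_order (by omega))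
        have : ij = ((0 : ℤ), j₀) := by
          have : ij.1 = 0 ∧ ij.2 = j₀ := by omega
          exact Prod.ext this.1 this.2
        exact absurd this hne'
      · intro hnm
        have : (HahnSeries.ofPowerSeries ℤ R u₂).coeff 0 = 0 := by
          by_contra hne'
          exact hnm (Finset.mem_addAntidiagonal.2 ⟨hne', hj₀coeff, by ring⟩)
        rw [this, zero_mul]
    rw [hmul] at hsum
    have hcc : IsUnit ((HahnSeries.ofPowerSeries ℤ R u₂).coeff 0) := by
      rw [ofPS_coeff_nonneg _ le_rfl, Int.toNat_zero,
        PowerSeries.coeff_zero_eq_constantCoeff_apply]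
      exact PowerSeries.isUnit_iff_constantCoeff.mp hu₂
    obtain ⟨w, hw⟩ := hcc
    apply hj₀coeff
    calc t.coeff j₀ = ((w⁻¹ : Rˣ) : R) * (w * t.coeff j₀) := by
          rw [← mul_assoc, Units.inv_mul, one_mul]
      _ = 0 := by rw [hw, ← hsum, mul_zero]
  have hseq : s = 1 := by
    rw [← sub_eq_zero, ← ht]
    exact ht0
  constructor
  · apply HahnSeries.ofPowerSeries_injective (Γ := ℤ) (R := R)
    rw [hs, hseq, mul_one]
  · calc g₁ = g₁ * (g₂ * v) := by rw [← hsdef, hseq, mul_one]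
      _ = g₂ * (g₁ * v) := by ring
      _ = g₂ := by rw [hg₁v, mul_one]

end LaurentFact

/-- A Laurent series which is invertible of constant degree `k` (coefficients below
degree `k` nilpotent, degree-`k` coefficient a unit) factors uniquely as
`X^k · u · g` with `u` an invertible power series and `g` a finitely supported series
in nonpositive degrees with constant term `1` and nilpotent lower coefficients. -/
theorem laurentSeries_factorisation {R : Type*} [CommRing R] (k : ℤ)
    (f : LaurentSeries R)
    (hlt : ∀ j < k, IsNilpotent (f.coeff j)) (hk : IsUnit (f.coeff k)) :
    ∃! p : PowerSeries R × LaurentSeries R,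
      IsUnit p.1 ∧
      (∀ j : ℤ, 0 < j → p.2.coeff j = 0) ∧
      p.2.coeff 0 = 1 ∧
      (∀ j : ℤ, j < 0 → IsNilpotent (p.2.coeff j)) ∧
      p.2.support.Finite ∧
      f = (HahnSeries.single k (1 : R)) * (HahnSeries.ofPowerSeries ℤ R p.1) * p.2 := by
  classical
  set h : LaurentSeries R := HahnSeries.single (-k) (1 : R) * f with hh
  have hcoeff : ∀ j : ℤ, h.coeff j = f.coeff (j + k) := by
    intro j
    have := HahnSeries.coeff_single_mul_add (r := (1 : R)) (x := f) (a := j + k) (b := -k)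
    rw [show j + k + -k = j by ring] at this
    rw [hh, this, one_mul]
  have hneg : ∀ j : ℤ, j < 0 → IsNilpotent (h.coeff j) := by
    intro j hj
    rw [hcoeff]
    exact hlt (j + k) (by omega)
  have h0 : IsUnit (h.coeff 0) := by
    rw [hcoeff, zero_add]
    exact hk
  set J : Ideal R := Ideal.span (h.coeff '' {j : ℤ | j < 0 ∧ h.coeff j ≠ 0}) with hJ
  have hle : J ≤ nilradical R :=
    Ideal.span_le.2 (by rintro r ⟨j, ⟨hj, _⟩, rfl⟩; exact hneg j hj)
  have hfg : J.FG := Submodule.fg_span ((LaurentFact.negSupport_finite h).image _)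
  obtain ⟨n, hn⟩ := Ideal.exists_pow_le_of_le_radical_of_fg (J := (0 : Ideal R)) hle hfg
  have hJn : J ^ (n + 1) = ⊥ :=
    le_bot_iff.mp (le_trans (Ideal.pow_le_pow_right (by omega)) hn)
  have hmem : ∀ j : ℤ, j < 0 → h.coeff j ∈ J := by
    intro j hj
    by_cases hz : h.coeff j = 0
    · rw [hz]; exact J.zero_mem
    · exact Ideal.subset_span ⟨j, ⟨hj, hz⟩, rfl⟩
  obtain ⟨u, g, hu, hgpos, hg0, hgJ, hgfin, hfac⟩ := LaurentFact.key n J h hJn hmem h0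
  have hsingle : HahnSeries.single k (1 : R) * HahnSeries.single (-k) (1 : R)
      = (1 : LaurentSeries R) := by
    rw [HahnSeries.single_mul_single, mul_one, add_neg_cancel, HahnSeries.single_zero_one]
  have hf : f = HahnSeries.single k (1 : R) * HahnSeries.ofPowerSeries ℤ R u * g := by
    calc f = HahnSeries.single k (1 : R) * HahnSeries.single (-k) (1 : R) * f := by
          rw [hsingle, one_mul]
      _ = HahnSeries.single k (1 : R) * h := by rw [hh, mul_assoc]
      _ = HahnSeries.single k (1 : R) * HahnSeries.ofPowerSeries ℤ R u * g := by
          rw [hfac, mul_assoc]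
  refine ⟨(u, g), ⟨hu, hgpos, hg0, fun j hj => hle (hgJ j hj), hgfin, hf⟩, ?_⟩
  rintro ⟨u₂, g₂⟩ ⟨hu₂, hg₂pos, hg₂0, hg₂nil, hg₂fin, hf₂⟩
  have heq : HahnSeries.ofPowerSeries ℤ R u₂ * g₂ = HahnSeries.ofPowerSeries ℤ R u * g := by
    have e1 : HahnSeries.single k (1 : R) * (HahnSeries.ofPowerSeries ℤ R u₂ * g₂)
        = HahnSeries.single k (1 : R) * (HahnSeries.ofPowerSeries ℤ R u * g) := by
      rw [← mul_assoc, ← hf₂, hf, mul_assoc]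
    have e2 := congrArg (fun w => HahnSeries.single (-k) (1 : R) * w) e1
    simp only [← mul_assoc] at e2
    rw [show HahnSeries.single (-k) (1 : R) * HahnSeries.single k (1 : R)
      = (1 : LaurentSeries R) by
        rw [HahnSeries.single_mul_single, mul_one, neg_add_cancel, HahnSeries.single_zero_one],
      one_mul, one_mul] at e2
    exact e2
  obtain ⟨hueq, hgeq⟩ := LaurentFact.uniq hu hg₂pos hg₂0 hg₂nil hg₂fin hgpos hg0 heq
  exact Prod.ext hueq hgeq
end

section
/- Let R be a commutative ring, d ≥ 1, and g ∈ R⟦X⟧ a power series whose coefficient in each degree j < d is nilpotent and whose coefficient in degree d is a unit. Then the image ḡ of g in the Laurent series ring R((X)) is a unit, and for every k ∈ ℤ, the coefficient of X^{−1} in ḡ^k · g′ (where g′ ∈ R⟦X⟧ is the formal derivative of g, viewed in R((X))) equals d·1 if k = −1 and equals 0 if k ≠ −1. -/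
open HahnSeries PowerSeries
noncomputable section
namespace ResAux
variable {R : Type*} [CommRing R]
def D (f : LaurentSeries R) : LaurentSeries R := LaurentSeries.derivative R f
lemma D_coeff (f : LaurentSeries R) (n : ℤ) :
    (D f).coeff n = ((n + 1 : ℤ) : R) * f.coeff (n + 1) := by
  simp [D, LaurentSeries.derivative_apply, LaurentSeries.hasseDeriv_coeff,
    Ring.choose_one_right, zsmul_eq_mul]
lemma single_mul_coeff (b : ℤ) (r : R) (x : LaurentSeries R) (n : ℤ) :
    ((single b r : LaurentSeries R) * x).coeff n = r * x.coeff (n - b) := by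
  rw [← sub_add_cancel n b, coeff_single_mul_add, sub_add_cancel]
lemma ofPS_coeff (p : R⟦X⟧) (i : ℤ) :
    (HahnSeries.ofPowerSeries ℤ R p).coeff i =
      if i < 0 then 0 else PowerSeries.coeff i.natAbs p :=
  PowerSeries.coeff_coe p i
lemma ofPS_coeff_neg (p : R⟦X⟧) {i : ℤ} (hi : i < 0) :
    (HahnSeries.ofPowerSeries ℤ R p).coeff i = 0 := by
  rw [ofPS_coeff, if_pos hi]
lemma rep (x : LaurentSeries R) :
    ∃ (e : ℤ) (p : R⟦X⟧),
      x = (single e 1 : LaurentSeries R) * HahnSeries.ofPowerSeries ℤ R p :=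
  ⟨x.order, x.powerSeriesPart, (LaurentSeries.single_order_mul_powerSeriesPart x).symm⟩

/-- Key structural lemma: derivative of `single e 1 * φ p`. -/
lemma D_single_mul (e : ℤ) (p : R⟦X⟧) :
    D ((single e 1 : LaurentSeries R) * HahnSeries.ofPowerSeries ℤ R p) =
      (single (e-1) ((e : ℤ) : R) : LaurentSeries R) * HahnSeries.ofPowerSeries ℤ R p +
      (single e 1 : LaurentSeries R) * HahnSeries.ofPowerSeries ℤ R (d⁄dX R p) := by
  ext n
  rw [HahnSeries.coeff_add, D_coeff, single_mul_coeff, single_mul_coeff, single_mul_coeff,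
    one_mul, one_mul, ofPS_coeff, ofPS_coeff, ofPS_coeff]
  have h1 : n + 1 - e = n - (e - 1) := by ring
  rw [h1]
  set m : ℤ := n - e with hm
  have h2 : n - (e-1) = m + 1 := by rw [hm]; ring
  rw [h2]
  rcases lt_trichotomy m (-1) with h | h | h
  · rw [if_pos (by omega : m + 1 < 0), if_pos (by omega : m < 0)]
    simp
  · rw [if_neg (by omega : ¬ m + 1 < 0), if_pos (by omega : m < 0)]
    have h3 : n + 1 = e := by omega
    rw [h3]; ring
  · rw [if_neg (by omega : ¬ m + 1 < 0), if_neg (by omega : ¬ m < 0)]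
    obtain ⟨a, ha⟩ : ∃ a : ℕ, m = (a : ℤ) := ⟨m.toNat, by omega⟩
    have hn : n = e + a := by omega
    subst hn
    have hnat : (m+1).natAbs = a + 1 := by omega
    have hnat2 : (m).natAbs = a := by omega
    rw [hnat, hnat2, PowerSeries.coeff_derivative]
    push_cast
    ring
variable {R : Type*} [CommRing R]

lemma single_add' (a : ℤ) (r s : R) :
    (single a (r + s) : LaurentSeries R) = single a r + single a s := by
  ext n
  by_cases h : n = a <;> simp [HahnSeries.coeff_single, h]

lemma mulmul (a b : ℤ) (r s : R) (p q : R⟦X⟧) :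
    ((single a r : LaurentSeries R) * HahnSeries.ofPowerSeries ℤ R p) *
      ((single b s : LaurentSeries R) * HahnSeries.ofPowerSeries ℤ R q) =
      (single (a+b) (r*s) : LaurentSeries R) * HahnSeries.ofPowerSeries ℤ R (p * q) := by
  rw [mul_mul_mul_comm, single_mul_single, ← map_mul]

lemma D_mul (x y : LaurentSeries R) : D (x * y) = D x * y + x * D y := by
  obtain ⟨a, p, rfl⟩ := rep x
  obtain ⟨b, q, rfl⟩ := rep y
  rw [mulmul, one_mul, D_single_mul, D_single_mul, D_single_mul]
  rw [Derivation.leibniz, smul_eq_mul, smul_eq_mul, map_add, mul_add]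
  rw [add_mul, mul_add, mulmul, mulmul, mulmul, mulmul]
  have hc : ((a + b : ℤ) : R) = ((a:ℤ):R) + ((b:ℤ):R) := by push_cast; ring
  rw [hc, single_add', add_mul]
  have e1 : a - 1 + b = a + b - 1 := by ring
  have e2 : a + (b-1) = a + b - 1 := by ring
  rw [e1, e2, mul_comm q (d⁄dX R p)]
  ring

lemma D_one : D (1 : LaurentSeries R) = 0 := by
  ext n
  rw [D_coeff]
  rcases eq_or_ne (n + 1) 0 with h | h
  · rw [h]; simp
  · rw [HahnSeries.coeff_one, if_neg h]; simp

lemma D_ofPS (p : R⟦X⟧) :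
    D (HahnSeries.ofPowerSeries ℤ R p) = HahnSeries.ofPowerSeries ℤ R (d⁄dX R p) := by
  have h := D_single_mul (R := R) 0 p
  rw [HahnSeries.single_zero_one, one_mul, one_mul] at h
  rw [h]
  norm_num

lemma L2_aux {A : Type*} [CommRing A]
    (hA : ∀ (j : ℕ) (a b : A), ((j:A)+1) * a = ((j:A)+1) * b → a = b)
    (p : A⟦X⟧) (j N : ℕ) (hN : N ≠ 0) :
    (N : A) * PowerSeries.coeff ((j+1)*N) (p^(j+1)) =
      PowerSeries.coeff ((j+1)*N - 1) (p^j * d⁄dX A p) := by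
  apply hA j
  have h1 : d⁄dX A (p^(j+1)) = (j+1) • (p^j * d⁄dX A p) := by
    rw [Derivation.leibniz_pow]
    rw [Nat.add_sub_cancel, smul_eq_mul]
  have hM : ((j+1)*N - 1) + 1 = (j+1)*N := by
    have : 1 ≤ (j+1)*N := Nat.one_le_iff_ne_zero.mpr (by positivity)
    omega
  have hcast : ((((j+1)*N - 1 : ℕ) : A) + 1) = (((j+1)*N : ℕ) : A) := by
    rw [← hM]; push_cast; ring
  have h2 : PowerSeries.coeff ((j+1)*N - 1) (d⁄dX A (p^(j+1))) =
      PowerSeries.coeff ((j+1)*N) (p^(j+1)) * (((j+1)*N : ℕ) : A) := by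
    rw [PowerSeries.coeff_derivative, hcast, hM]
  rw [h1, map_nsmul, nsmul_eq_mul] at h2
  push_cast at h2 ⊢
  linear_combination -h2

lemma derivative_map {A B : Type*} [CommRing A] [CommRing B] (f : A →+* B) (p : A⟦X⟧) :
    PowerSeries.map f (d⁄dX A p) = d⁄dX B (PowerSeries.map f p) := by
  ext n
  simp [PowerSeries.coeff_derivative, PowerSeries.coeff_map]

lemma L2 (p : R⟦X⟧) (j N : ℕ) (hN : N ≠ 0) :
    (N : R) * PowerSeries.coeff ((j+1)*N) (p^(j+1)) =
      PowerSeries.coeff ((j+1)*N - 1) (p^j * d⁄dX R p) := by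
  set A := MvPolynomial ℕ ℤ with hAdef
  have hA : ∀ (j : ℕ) (a b : A), ((j:A)+1) * a = ((j:A)+1) * b → a = b := by
    intro j a b h
    refine mul_left_cancel₀ ?_ h
    have : ((j:A)+1) = ((j+1 : ℕ) : A) := by push_cast; ring
    rw [this]
    exact Nat.cast_ne_zero.mpr (Nat.succ_ne_zero j)
  set ψ : A →+* R := (MvPolynomial.eval₂Hom (Int.castRingHom R) fun i => PowerSeries.coeff i p)
  set P : A⟦X⟧ := PowerSeries.mk fun i => MvPolynomial.X i with hP
  have hmap : PowerSeries.map ψ P = p := by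
    ext n
    rw [PowerSeries.coeff_map, hP, PowerSeries.coeff_mk]
    exact MvPolynomial.eval₂Hom_X' _ _ _
  have e1 : PowerSeries.map ψ (P^(j+1)) = p^(j+1) := by rw [map_pow, hmap]
  have e2 : PowerSeries.map ψ (P^j * d⁄dX A P) = p^j * d⁄dX R p := by
    rw [map_mul, map_pow, derivative_map, hmap]
  have h := congrArg ψ (L2_aux hA P j N hN)
  rw [map_mul, map_natCast, ← PowerSeries.coeff_map, ← PowerSeries.coeff_map, e1, e2] at h
  exact h

lemma resL (w : LaurentSeries R) (j : ℕ) : ((w ^ j) * D w).coeff (-1) = 0 := by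
  obtain ⟨e, p, rfl⟩ := rep w
  have hpow : ((single e 1 : LaurentSeries R) * HahnSeries.ofPowerSeries ℤ R p)^j
      = (single ((j:ℤ)*e) 1 : LaurentSeries R) * HahnSeries.ofPowerSeries ℤ R (p^j) := by
    rw [mul_pow, single_pow, one_pow, map_pow, nsmul_eq_mul]
  rw [D_single_mul, hpow, mul_add, mulmul, mulmul, one_mul, mul_one,
    HahnSeries.coeff_add, single_mul_coeff, single_mul_coeff, one_mul]
  have i1 : (-1 : ℤ) - ((j:ℤ)*e + (e-1)) = -((j:ℤ)+1)*e := by ring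
  have i2 : (-1 : ℤ) - ((j:ℤ)*e + e) = -((j:ℤ)+1)*e - 1 := by ring
  rw [i1, i2]
  rcases lt_trichotomy e 0 with he | he | he
  · obtain ⟨N, hNe⟩ : ∃ N : ℕ, e = -(N:ℤ) := ⟨e.natAbs, by omega⟩
    have hN : N ≠ 0 := by omega
    subst hNe
    have j1 : -((j:ℤ)+1) * (-(N:ℤ)) = ((j+1)*N : ℕ) := by push_cast; ring
    have j2 : -((j:ℤ)+1) * (-(N:ℤ)) - 1 = (((j+1)*N - 1 : ℕ) : ℤ) := by
      have : 1 ≤ (j+1)*N := Nat.one_le_iff_ne_zero.mpr (by positivity)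
      push_cast [this]
      ring
    rw [j2, j1, ofPS_coeff, ofPS_coeff, if_neg (by omega : ¬ (((j+1)*N : ℕ) : ℤ) < 0),
      if_neg (by omega : ¬ ((((j+1)*N - 1 : ℕ)) : ℤ) < 0), Int.natAbs_natCast, Int.natAbs_natCast]
    rw [← pow_succ, ← L2 p j N hN]
    push_cast
    ring
  · subst he
    rw [show (-((j:ℤ)+1) * 0 - 1) = -1 by ring, show (-((j:ℤ)+1) * 0) = 0 by ring,
      ofPS_coeff_neg _ (by norm_num : (-1 : ℤ) < 0)]
    norm_num
  · have h1 : -((j:ℤ)+1)*e < 0 := by nlinarith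
    rw [ofPS_coeff_neg _ h1, ofPS_coeff_neg _ (by linarith), mul_zero, add_zero]

lemma D_add (x y : LaurentSeries R) : D (x + y) = D x + D y := by
  simp [D, map_add]

lemma D_neg (x : LaurentSeries R) : D (-x) = - D x := by
  simp [D, map_neg]

lemma coeff_sum {α : Type*} (s : Finset α) (f : α → LaurentSeries R) (n : ℤ) :
    (∑ i ∈ s, f i).coeff n = ∑ i ∈ s, (f i).coeff n :=
  map_sum (HahnSeries.coeff.addMonoidHom n) f s

lemma resL_neg (h : LaurentSeries R) (i : ℕ) : ((-h)^i * D h).coeff (-1) = 0 := by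
  have h1 := resL (-h) i
  rw [D_neg] at h1
  have h3 : (-h)^i * D h = -((-h)^i * - D h) := by ring
  rw [h3, HahnSeries.coeff_neg, h1, neg_zero]

lemma one_add_mul_geom {A : Type*} [CommRing A] (h : A) (n : ℕ) (hn : h ^ n = 0) :
    (1 + h) * ∑ i ∈ Finset.range n, (-h) ^ i = 1 := by
  have hgeo := mul_neg_geom_sum (-h) n
  rw [sub_neg_eq_add, neg_pow, hn, mul_zero, sub_zero] at hgeo
  exact hgeo

lemma res_geom (h : LaurentSeries R) (n : ℕ) :
    ((∑ i ∈ Finset.range n, (-h) ^ i) * D h).coeff (-1) = 0 := by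
  rw [Finset.sum_mul, coeff_sum]
  exact Finset.sum_eq_zero fun i _ => resL_neg h i

end ResAux


/-- If `g` is a Weierstrass series of degree `d ≥ 1`, then `g` becomes a unit in the
Laurent series ring, and the residue (coefficient of `X⁻¹`) of `g^k · g′` is `d` when
`k = -1` and `0` otherwise. -/
theorem residue_of_weierstrass_series {R : Type*} [CommRing R] (d : ℕ) (hd : 1 ≤ d)
    (g : PowerSeries R)
    (hlt : ∀ j < d, IsNilpotent (PowerSeries.coeff j g))
    (hdu : IsUnit (PowerSeries.coeff d g)) :
    IsUnit (HahnSeries.ofPowerSeries ℤ R g) ∧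
    ∀ v : (LaurentSeries R)ˣ, (v : LaurentSeries R) = HahnSeries.ofPowerSeries ℤ R g →
      ∀ k : ℤ,
        (((v ^ k : (LaurentSeries R)ˣ) : LaurentSeries R) *
            HahnSeries.ofPowerSeries ℤ R (PowerSeries.derivative R g)).coeff (-1) =
          if k = -1 then (d : R) else 0 := by
  classical
  set t : PowerSeries R := PowerSeries.mk fun j => PowerSeries.coeff (d + j) g with ht
  set ε : PowerSeries R := ((PowerSeries.trunc d g : Polynomial R) : PowerSeries R) with hε
  have hsplit : g = ε + PowerSeries.X ^ d * t := by
    ext n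
    rw [map_add, hε, Polynomial.coeff_coe, PowerSeries.coeff_trunc,
      PowerSeries.coeff_X_pow_mul']
    split_ifs with h1 h2 h3
    · omega
    · simp
    · rw [ht, PowerSeries.coeff_mk, show d + (n - d) = n from by omega, zero_add]
    · omega
  have htunit : IsUnit t := by
    rw [PowerSeries.isUnit_iff_constantCoeff]
    have hc : PowerSeries.constantCoeff t = PowerSeries.coeff d g := by
      rw [← PowerSeries.coeff_zero_eq_constantCoeff, ht, PowerSeries.coeff_mk, add_zero]
    rw [hc]; exact hdu
  have hεnil : IsNilpotent ε := by
    have hp : IsNilpotent (PowerSeries.trunc d g) := by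
      rw [Polynomial.isNilpotent_iff]
      intro i
      rw [PowerSeries.coeff_trunc]
      split_ifs with h
      · exact hlt i h
      · exact IsNilpotent.zero
    have := hp.map (Polynomial.coeToPowerSeries.ringHom (R := R))
    rwa [Polynomial.coeToPowerSeries.ringHom_apply] at this
  have hφεnil : IsNilpotent (HahnSeries.ofPowerSeries ℤ R ε) :=
    hεnil.map (HahnSeries.ofPowerSeries ℤ R)
  obtain ⟨tu, htu⟩ := htunit
  have hss : (HahnSeries.single (d:ℤ) 1 : LaurentSeries R) * HahnSeries.single (-(d:ℤ)) 1
      = 1 := by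
    rw [HahnSeries.single_mul_single, add_neg_cancel, mul_one, HahnSeries.single_zero_one]
  have hpt : HahnSeries.ofPowerSeries ℤ R t *
      HahnSeries.ofPowerSeries ℤ R ((tu⁻¹ : (PowerSeries R)ˣ) : PowerSeries R) = 1 := by
    rw [← map_mul, ← htu, ← Units.val_mul, mul_inv_cancel, Units.val_one, map_one]
  have hpt' : HahnSeries.ofPowerSeries ℤ R ((tu⁻¹ : (PowerSeries R)ˣ) : PowerSeries R) *
      HahnSeries.ofPowerSeries ℤ R t = 1 := by rw [mul_comm]; exact hpt
  set u0 : LaurentSeries R :=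
    HahnSeries.single (d:ℤ) 1 * HahnSeries.ofPowerSeries ℤ R t with hu0def
  set u0inv : LaurentSeries R :=
    HahnSeries.single (-(d:ℤ)) 1 *
      HahnSeries.ofPowerSeries ℤ R ((tu⁻¹ : (PowerSeries R)ˣ) : PowerSeries R) with hu0invdef
  have hu0 : u0 * u0inv = 1 := by
    rw [hu0def, hu0invdef]
    calc HahnSeries.single (d:ℤ) 1 * HahnSeries.ofPowerSeries ℤ R t *
        (HahnSeries.single (-(d:ℤ)) 1 *
          HahnSeries.ofPowerSeries ℤ R ((tu⁻¹ : (PowerSeries R)ˣ) : PowerSeries R)) =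
        (HahnSeries.single (d:ℤ) 1 * HahnSeries.single (-(d:ℤ)) 1) *
        (HahnSeries.ofPowerSeries ℤ R t *
          HahnSeries.ofPowerSeries ℤ R ((tu⁻¹ : (PowerSeries R)ˣ) : PowerSeries R)) := by ring
    _ = 1 := by rw [hss, hpt, mul_one]
  have hXd : HahnSeries.ofPowerSeries ℤ R (PowerSeries.X ^ d)
      = HahnSeries.single (d:ℤ) 1 := by
    rw [map_pow, HahnSeries.ofPowerSeries_X, HahnSeries.single_pow, one_pow,
      nsmul_eq_mul, mul_one]
  have hfdecomp : HahnSeries.ofPowerSeries ℤ R g = u0 + HahnSeries.ofPowerSeries ℤ R ε := by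
    nth_rewrite 1 [hsplit]
    rw [map_add, map_mul, hXd, hu0def, add_comm]
  set h : LaurentSeries R := u0inv * HahnSeries.ofPowerSeries ℤ R ε with hhdef
  have hhnil : IsNilpotent h := by
    obtain ⟨n, hn⟩ := hφεnil
    exact ⟨n, by rw [hhdef, mul_pow, hn, mul_zero]⟩
  have hfu : HahnSeries.ofPowerSeries ℤ R g = u0 * (1 + h) := by
    rw [hfdecomp, mul_add, mul_one, hhdef, ← mul_assoc, hu0, one_mul]
  have hunit : IsUnit (HahnSeries.ofPowerSeries ℤ R g) := by
    rw [hfu]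
    exact (IsUnit.of_mul_eq_one _ hu0).mul hhnil.isUnit_one_add
  refine ⟨hunit, ?_⟩
  intro v hv k
  have hDf : ResAux.D (HahnSeries.ofPowerSeries ℤ R g)
      = HahnSeries.ofPowerSeries ℤ R (PowerSeries.derivative R g) := ResAux.D_ofPS g
  set w : LaurentSeries R := ((v⁻¹ : (LaurentSeries R)ˣ) : LaurentSeries R) with hwdef
  have hfw : HahnSeries.ofPowerSeries ℤ R g * w = 1 := by
    rw [← hv, hwdef, ← Units.val_mul, mul_inv_cancel, Units.val_one]
  rcases le_or_gt 0 k with hk | hk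
  · lift k to ℕ using hk
    rw [if_neg (by omega : ¬ (k : ℤ) = -1)]
    have hvk : ((v ^ (k : ℤ) : (LaurentSeries R)ˣ) : LaurentSeries R) =
        HahnSeries.ofPowerSeries ℤ R (g ^ k) := by
      rw [zpow_natCast, Units.val_pow_eq_pow_val, hv, ← map_pow]
    rw [hvk, ← map_mul]
    exact ResAux.ofPS_coeff_neg _ (by norm_num)
  · obtain ⟨m, hm⟩ : ∃ m : ℕ, k = -((m : ℤ) + 1) := ⟨(-k).toNat - 1, by omega⟩
    have hvk : ((v ^ k : (LaurentSeries R)ˣ) : LaurentSeries R) = w ^ (m+1) := by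
      rw [hm, show (-((m:ℤ)+1)) = -((m+1 : ℕ) : ℤ) by push_cast; ring, zpow_neg,
        zpow_natCast, ← inv_pow, hwdef, ← Units.val_pow_eq_pow_val]
    rw [hvk, ← hDf]
    rcases Nat.eq_zero_or_pos m with rfl | hmpos
    · -- k = -1
      rw [if_pos (by omega), pow_one]
      obtain ⟨n, hn⟩ := hhnil
      set S : LaurentSeries R := ∑ i ∈ Finset.range n, (-h)^i with hSdef
      have hSmul : (1 + h) * S = 1 := ResAux.one_add_mul_geom h n hn
      have hfinv : HahnSeries.ofPowerSeries ℤ R g * (u0inv * S) = 1 := by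
        rw [hfu]
        calc u0 * (1 + h) * (u0inv * S) = (u0 * u0inv) * ((1 + h) * S) := by ring
        _ = 1 := by rw [hu0, hSmul, mul_one]
      have hw : w = u0inv * S := by
        have h1 : (HahnSeries.ofPowerSeries ℤ R g * w) * (u0inv * S) =
            w * (HahnSeries.ofPowerSeries ℤ R g * (u0inv * S)) := by ring
        rw [hfw, one_mul, hfinv, mul_one] at h1
        exact h1.symm
      have hDu0 : ResAux.D u0 =
          HahnSeries.single ((d:ℤ)-1) ((d:ℤ):R) * HahnSeries.ofPowerSeries ℤ R t +
          HahnSeries.single (d:ℤ) 1 *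
            HahnSeries.ofPowerSeries ℤ R (PowerSeries.derivative R t) := by
        rw [hu0def, ResAux.D_single_mul]
      have hD1h : ResAux.D (1 + h) = ResAux.D h := by
        rw [ResAux.D_add, ResAux.D_one, zero_add]
      have hDg : ResAux.D (HahnSeries.ofPowerSeries ℤ R g) =
          ResAux.D u0 * (1 + h) + u0 * ResAux.D h := by
        rw [hfu, ResAux.D_mul, hD1h]
      rw [hw, hDg]
      have hsplit2 : (u0inv * S) * (ResAux.D u0 * (1 + h) + u0 * ResAux.D h) =
          (u0inv * ResAux.D u0) * ((1 + h) * S) + (u0 * u0inv) * (S * ResAux.D h) := by ring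
      rw [hsplit2, hSmul, hu0, mul_one, one_mul]
      have hA : u0inv * ResAux.D u0 =
          HahnSeries.single (-1 : ℤ) ((d:ℤ):R) +
          HahnSeries.ofPowerSeries ℤ R (((tu⁻¹ : (PowerSeries R)ˣ) : PowerSeries R) *
            PowerSeries.derivative R t) := by
        rw [hDu0, hu0invdef, mul_add, ResAux.mulmul, ResAux.mulmul]
        rw [show -(d:ℤ) + ((d:ℤ)-1) = -1 by ring, show -(d:ℤ) + (d:ℤ) = 0 by ring,
          one_mul, mul_one, HahnSeries.single_zero_one, one_mul]
        congr 1
        rw [show ((tu⁻¹ : (PowerSeries R)ˣ) : PowerSeries R) * t = 1 from by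
          rw [← htu, ← Units.val_mul, inv_mul_cancel, Units.val_one], map_one, mul_one]
      rw [hA, HahnSeries.coeff_add, HahnSeries.coeff_add, HahnSeries.coeff_single_same,
        ResAux.ofPS_coeff_neg _ (by norm_num), hSdef, ResAux.res_geom h n]
      push_cast
      ring
    · -- k ≤ -2
      rw [if_neg (by omega)]
      obtain ⟨j, rfl⟩ : ∃ j : ℕ, m = j + 1 := ⟨m - 1, by omega⟩
      have hDrel : ResAux.D (HahnSeries.ofPowerSeries ℤ R g) * w +
          HahnSeries.ofPowerSeries ℤ R g * ResAux.D w = 0 := by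
        have hrel := ResAux.D_mul (HahnSeries.ofPowerSeries ℤ R g) w
        rw [hfw, ResAux.D_one] at hrel
        exact hrel.symm
      have hDfw : ResAux.D (HahnSeries.ofPowerSeries ℤ R g) * w =
          -(HahnSeries.ofPowerSeries ℤ R g * ResAux.D w) :=
        eq_neg_of_add_eq_zero_left hDrel
      have key : w ^ (j+1+1) * ResAux.D (HahnSeries.ofPowerSeries ℤ R g) =
          -((w^j * ResAux.D w) * (HahnSeries.ofPowerSeries ℤ R g * w)) := by
        calc w ^ (j+1+1) * ResAux.D (HahnSeries.ofPowerSeries ℤ R g)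
            = (w^j * w) * (ResAux.D (HahnSeries.ofPowerSeries ℤ R g) * w) := by ring
        _ = (w^j * w) * (-(HahnSeries.ofPowerSeries ℤ R g * ResAux.D w)) := by rw [hDfw]
        _ = -((w^j * ResAux.D w) * (HahnSeries.ofPowerSeries ℤ R g * w)) := by ring
      rw [key, hfw, mul_one, HahnSeries.coeff_neg, ResAux.resL w j, neg_zero]
end
end

section
/- Let R be a commutative ring, n ∈ ℕ, and let a, a′ : Fin(n+1) → R be two tuples each of which generates the unit ideal of R (i.e. there exist b, b′ with Σ_i b_i a_i = 1 and Σ_i b′_i a′_i = 1). Then there exists a unit u ∈ R^× with u·a′_j = a_j for all j if and only if a_i·a′_j = a_j·a′_i for all i, j. -/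
/-- Two systems of homogeneous coordinates (tuples generating the unit ideal) differ by a
unit if and only if all the "cross products" agree. -/
theorem homogeneous_coordinates_unique {R : Type*} [CommRing R] (n : ℕ)
    (a a' : Fin (n + 1) → R)
    (ha : ∃ b : Fin (n + 1) → R, ∑ i, b i * a i = 1)
    (ha' : ∃ b' : Fin (n + 1) → R, ∑ i, b' i * a' i = 1) :
    (∃ u : Rˣ, ∀ j, (u : R) * a' j = a j) ↔ ∀ i j, a i * a' j = a j * a' i := by
  constructor
  · rintro ⟨u, hu⟩ i j
    rw [← hu i, ← hu j]; ring
  · intro h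
    obtain ⟨b, hb⟩ := ha
    obtain ⟨b', hb'⟩ := ha'
    set v : R := ∑ i, b i * a' i with hv
    set w : R := ∑ i, b' i * a i with hw
    have hva : ∀ j, v * a j = a' j := by
      intro j
      calc v * a j = ∑ i, b i * (a i * a' j) := by
            rw [hv, Finset.sum_mul]
            refine Finset.sum_congr rfl fun i _ => ?_
            rw [h i j]; ring
        _ = (∑ i, b i * a i) * a' j := by rw [Finset.sum_mul]; exact Finset.sum_congr rfl fun i _ => by ring
        _ = a' j := by rw [hb, one_mul]
    have hwa : ∀ j, w * a' j = a j := by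
      intro j
      calc w * a' j = ∑ i, b' i * (a' i * a j) := by
            rw [hw, Finset.sum_mul]
            refine Finset.sum_congr rfl fun i _ => ?_
            rw [mul_assoc, h i j]; ring
        _ = (∑ i, b' i * a' i) * a j := by rw [Finset.sum_mul]; exact Finset.sum_congr rfl fun i _ => by ring
        _ = a j := by rw [hb', one_mul]
    have hwv : w * v = 1 := by
      calc w * v = w * v * ∑ j, b j * a j := by rw [hb, mul_one]
        _ = ∑ j, b j * (w * (v * a j)) := by
            rw [Finset.mul_sum]
            refine Finset.sum_congr rfl fun j _ => ?_
            ring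
        _ = ∑ j, b j * a j := by
            refine Finset.sum_congr rfl fun j _ => ?_
            rw [hva j, hwa j]
        _ = 1 := hb
    exact ⟨⟨w, v, hwv, by rw [mul_comm]; exact hwv⟩, hwa⟩
end

section
/- Let B be a commutative ring, A a B-algebra which is free as a B-module, and I an ideal of A. Then there exists an ideal I′ of B such that for every commutative ring R and every ring homomorphism y: B → R, the natural surjection R ⊗_B A → R ⊗_B (A/I) is an isomorphism if and only if y maps I′ to zero. -/
universe u v

/-- Openness of very flat maps, algebraic form: if `A` is a `B`-algebra which is free
as a `B`-module and `I ⊆ A` is an ideal, then there is an ideal `I′ ⊆ B` such that for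
every ring `S` and every `y : B → S`, the natural surjection
`S ⊗_B A → S ⊗_B (A/I)` is an isomorphism iff `y` kills `I′`. -/
theorem very_flat_is_open (B : Type u) (A : Type v) [CommRing B] [CommRing A]
    [Algebra B A] [Module.Free B A] (I : Ideal A) :
    ∃ I' : Ideal B, ∀ (S : Type u) [CommRing S], ∀ (y : B →+* S),
      letI : Algebra B S := y.toAlgebra
      (Function.Bijective
          (LinearMap.lTensor (R := B) S (Ideal.Quotient.mkₐ B I).toLinearMap) ↔
        ∀ x ∈ I', y x = 0) := by
  classical
  let b := Module.Free.chooseBasis B A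
  refine ⟨⨆ i, Submodule.map (b.coord i) (Submodule.restrictScalars B I), fun S _ y => ?_⟩
  letI : Algebra B S := y.toAlgebra
  have halg : ∀ r : B, algebraMap B S r = y r := fun r => rfl
  -- membership reformulation
  have hmem : (∀ x ∈ ⨆ i, Submodule.map (b.coord i) (Submodule.restrictScalars B I), y x = 0)
      ↔ ∀ a ∈ I, ∀ i, y (b.repr a i) = 0 := by
    constructor
    · intro h a ha i
      exact h _ (Submodule.mem_iSup_of_mem i ⟨a, ha, rfl⟩)
    · intro h x hx
      have : (⨆ i, Submodule.map (b.coord i) (Submodule.restrictScalars B I)) ≤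
          RingHom.ker y := by
        refine iSup_le fun i => ?_
        rintro _ ⟨a, ha, rfl⟩
        exact h a ha i
      exact this hx
  -- coordinate vanishing iff 1 ⊗ a = 0
  have hcoord : ∀ a : A, ((1 : S) ⊗ₜ[B] a = 0) ↔ ∀ i, y (b.repr a i) = 0 := by
    intro a
    constructor
    · intro h i
      have := congrArg (fun z => (b.baseChange S).repr z i) h
      simp only [Module.Basis.baseChange_repr_tmul, map_zero, Finsupp.coe_zero, Pi.zero_apply] at this
      rw [← this, Algebra.smul_def, halg, mul_one]
    · intro h
      apply (b.baseChange S).repr.injective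
      ext i
      simp only [Module.Basis.baseChange_repr_tmul, map_zero, Finsupp.coe_zero, Pi.zero_apply]
      rw [Algebra.smul_def, halg, mul_one]
      exact h i
  rw [hmem]
  -- main equivalence
  constructor
  · intro h a ha i
    have h0 : LinearMap.lTensor (R := B) S (Ideal.Quotient.mkₐ B I).toLinearMap
        ((1 : S) ⊗ₜ[B] a) = 0 := by
      simp [Ideal.Quotient.eq_zero_iff_mem.mpr ha]
    have : (1 : S) ⊗ₜ[B] a = 0 := by
      apply h.injective
      rw [h0, map_zero]
    exact (hcoord a).mp this i
  · intro h
    have htmul : ∀ a ∈ I, (1 : S) ⊗ₜ[B] a = 0 := fun a ha =>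
      (hcoord a).mpr fun i => h a ha i
    have hsurj : Function.Surjective (Ideal.Quotient.mkₐ B I).toLinearMap :=
      Ideal.Quotient.mkₐ_surjective B I
    have hexact : Function.Exact (Submodule.restrictScalars B I).subtype
        (Ideal.Quotient.mkₐ B I).toLinearMap := by
      rw [LinearMap.exact_iff]
      ext x
      simp [Ideal.Quotient.eq_zero_iff_mem]
    have hex2 := lTensor_exact (R := B) S hexact hsurj
    have hzero : LinearMap.lTensor (R := B) S (Submodule.restrictScalars B I).subtype = 0 := by
      apply TensorProduct.ext'
      intro s a
      have : (s : S) ⊗ₜ[B] (a : A) = s • ((1 : S) ⊗ₜ[B] (a : A)) := by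
        rw [TensorProduct.smul_tmul', smul_eq_mul, mul_one]
      simp only [LinearMap.lTensor_tmul, Submodule.coe_subtype, LinearMap.zero_apply]
      rw [this, htmul a a.2, smul_zero]
    have hinj : Function.Injective
        (LinearMap.lTensor (R := B) S (Ideal.Quotient.mkₐ B I).toLinearMap) := by
      rw [← LinearMap.ker_eq_bot, LinearMap.exact_iff.mp hex2, hzero, LinearMap.range_zero]
    exact ⟨hinj, LinearMap.lTensor_surjective S hsurj⟩
end

section
/- Let A be a commutative ring and let A[T,T⁻¹] denote the Laurent polynomial ring over A. There is a bijection between: (a) ring homomorphisms α: A → A[T,T⁻¹] such that (i) composing α with evaluation of T at 1 gives the identity of A, and (ii) the two ring homomorphisms A → A[T^{±1}, U^{±1}] obtained from α, namely applying α and then applying α to each coefficient (with the new variable named U), and applying α and then the A-algebra map sending T to T·U, are equal; and (b) ℤ-gradings of A, i.e. families (A_k)_{k∈ℤ} of additive subgroups with A equal to the internal direct sum ⊕_{k∈ℤ} A_k, with 1 ∈ A_0 and A_j·A_k ⊆ A_{j+k} for all j, k. The bijection sends α to the family A_k = {a ∈ A : α(a) = a·T^k}. -/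
open LaurentPolynomial

/-- `T^•` as a monoid homomorphism `Multiplicative ℤ →* S[T;T⁻¹]`. -/
noncomputable def LaurentPolynomial.Tmonoid (S : Type*) [CommSemiring S] :
    Multiplicative ℤ →* S[T;T⁻¹] where
  toFun k := T (Multiplicative.toAdd k)
  map_one' := by simp [T_zero]
  map_mul' x y := by simp only [toAdd_mul, T_add]

/-- `(T·U)^•` as a monoid homomorphism `Multiplicative ℤ →* A[T;T⁻¹][U;U⁻¹]`, where the
outer variable is the original one and the inner variable is the new one. -/
noncomputable def LaurentPolynomial.TUmonoid (A : Type*) [CommSemiring A] :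
    Multiplicative ℤ →* (A[T;T⁻¹])[T;T⁻¹] where
  toFun k := LaurentPolynomial.C (T (Multiplicative.toAdd k)) * T (Multiplicative.toAdd k)
  map_one' := by simp [T_zero]
  map_mul' x y := by
    simp only [toAdd_mul, T_add, map_mul]
    ring

/-- The counit and coassociativity conditions on a ring homomorphism
`α : A → A[T;T⁻¹]`, expressing that `α` is a coaction of the multiplicative group on
`A`: evaluating `T` at `1` after `α` is the identity, and applying `α` to the
coefficients of `α a` agrees with substituting `T·U` for `T` in `α a`. -/
def IsMultiplicativeCoaction (A : Type*) [CommRing A] (α : A →+* A[T;T⁻¹]) : Prop :=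
  (∀ a : A, (AddMonoidAlgebra.lift A A ℤ 1) (α a) = a) ∧
  (AddMonoidAlgebra.liftNCRingHom (LaurentPolynomial.C.comp α)
      (Tmonoid (A[T;T⁻¹])) (fun _ _ => Commute.all _ _)).comp α =
    (AddMonoidAlgebra.liftNCRingHom
      ((LaurentPolynomial.C : A[T;T⁻¹] →+* (A[T;T⁻¹])[T;T⁻¹]).comp LaurentPolynomial.C)
      (TUmonoid A) (fun _ _ => Commute.all _ _)).comp α

namespace GradCoact
open DirectSum

variable {A : Type*} [CommRing A]

lemma finset_sum_single_apply {M : Type*} [AddCommMonoid M] (s : Finset ℤ) (v : ℤ → M)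
    (j : ℤ) (hj : j ∉ s → v j = 0) :
    (∑ i ∈ s, Finsupp.single i (v i)) j = v j := by
  classical
  rw [Finsupp.finset_sum_apply]
  by_cases h : j ∈ s
  · rw [Finset.sum_eq_single_of_mem j h (fun b _ hb => by
      simp [Finsupp.single_apply, hb]), Finsupp.single_eq_same]
  · rw [Finset.sum_eq_zero (fun b hb => by
      simp only [Finsupp.single_apply]
      exact if_neg (fun h' : b = j => h (h' ▸ hb))), hj h]

lemma fsum_single_apply {M : Type*} [AddCommMonoid M] (f : ℤ →₀ A) (g : ℤ → A → M)
    (hg : ∀ i, g i 0 = 0) (k : ℤ) :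
    (f.sum fun i c => Finsupp.single i (g i c)) k = g k (f k) := by
  classical
  rw [Finsupp.sum]
  exact finset_sum_single_apply _ _ _ (fun h => by
    rw [Finsupp.notMem_support_iff.mp h, hg])

/-- counit as a plain sum of coefficients -/
lemma counit_sum {α : A →+* A[T;T⁻¹]} (hα : IsMultiplicativeCoaction A α) (a : A) :
    ((α a).coeff.sum fun _ c => c) = a := by
  have h := hα.1 a
  rw [AddMonoidAlgebra.lift_apply] at h
  simpa using h

lemma liftL_single (α : A →+* A[T;T⁻¹]) (i : ℤ) (c : A) :
    (AddMonoidAlgebra.liftNCRingHom (LaurentPolynomial.C.comp α)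
      (Tmonoid (A[T;T⁻¹])) (fun _ _ => Commute.all _ _)) (AddMonoidAlgebra.single i c) =
    AddMonoidAlgebra.single i (α c) := by
  have h1 : (AddMonoidAlgebra.liftNCRingHom (LaurentPolynomial.C.comp α)
      (Tmonoid (A[T;T⁻¹])) (fun _ _ => Commute.all _ _)) (AddMonoidAlgebra.single i c) =
      (LaurentPolynomial.C.comp α) c * (Tmonoid (A[T;T⁻¹])) (Multiplicative.ofAdd i) :=
    AddMonoidAlgebra.liftNC_single _ _ _ _
  rw [h1]
  show LaurentPolynomial.C (α c) * T i = _
  rw [single_eq_C_mul_T]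

lemma liftR_single (i : ℤ) (c : A) :
    (AddMonoidAlgebra.liftNCRingHom
      ((LaurentPolynomial.C : A[T;T⁻¹] →+* (A[T;T⁻¹])[T;T⁻¹]).comp LaurentPolynomial.C)
      (TUmonoid A) (fun _ _ => Commute.all _ _)) (AddMonoidAlgebra.single i c) =
    AddMonoidAlgebra.single i (LaurentPolynomial.C c * T i) := by
  have h1 : (AddMonoidAlgebra.liftNCRingHom
      ((LaurentPolynomial.C : A[T;T⁻¹] →+* (A[T;T⁻¹])[T;T⁻¹]).comp LaurentPolynomial.C)
      (TUmonoid A) (fun _ _ => Commute.all _ _)) (AddMonoidAlgebra.single i c) =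
      (LaurentPolynomial.C.comp (LaurentPolynomial.C (R := A))) c *
        (TUmonoid A) (Multiplicative.ofAdd i) :=
    AddMonoidAlgebra.liftNC_single _ _ _ _
  rw [h1]
  show LaurentPolynomial.C (LaurentPolynomial.C c) *
    (LaurentPolynomial.C (T i) * T i) = _
  rw [← mul_assoc, ← map_mul, single_eq_C_mul_T]

lemma coassoc_coeff {α : A →+* A[T;T⁻¹]} (hα : IsMultiplicativeCoaction A α) (a : A) (k : ℤ) :
    α ((α a).coeff k) = LaurentPolynomial.C ((α a).coeff k) * T k := by
  have h := RingHom.congr_fun hα.2 a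
  simp only [RingHom.comp_apply] at h
  rw [← AddMonoidAlgebra.sum_coeff_single (α a), map_finsuppSum, map_finsuppSum] at h
  simp only [liftL_single, liftR_single] at h
  have := congrArg (fun f : A[T;T⁻¹][T;T⁻¹] => f.coeff k) h
  simp only [AddMonoidAlgebra.coeff_finsuppSum, AddMonoidAlgebra.coeff_single] at this
  rwa [fsum_single_apply _ _ (fun i => by rw [map_zero]) k,
    fsum_single_apply _ _ (fun i => by rw [map_zero, zero_mul]) k] at this

/-- the grading associated to a coaction -/
def grading (α : A →+* A[T;T⁻¹]) (k : ℤ) : AddSubgroup A where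
  carrier := {a : A | α a = LaurentPolynomial.C a * T k}
  zero_mem' := by simp only [Set.mem_setOf_eq, map_zero, zero_mul]
  add_mem' := by
    intro a b ha hb
    simp only [Set.mem_setOf_eq] at *
    rw [map_add, ha, hb, map_add, add_mul]
  neg_mem' := by
    intro a ha
    simp only [Set.mem_setOf_eq] at *
    rw [map_neg, ha, map_neg, neg_mul]

lemma mem_grading_iff {α : A →+* A[T;T⁻¹]} {k : ℤ} {a : A} :
    a ∈ grading α k ↔ α a = LaurentPolynomial.C a * T k := Iff.rfl

lemma one_mem_grading {α : A →+* A[T;T⁻¹]} : (1 : A) ∈ grading α 0 := by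
  rw [mem_grading_iff, map_one, map_one, T_zero, mul_one]

lemma mul_mem_grading {α : A →+* A[T;T⁻¹]} {j k : ℤ} {a b : A}
    (ha : a ∈ grading α j) (hb : b ∈ grading α k) : a * b ∈ grading α (j + k) := by
  rw [mem_grading_iff] at *
  rw [map_mul, ha, hb, map_mul, T_add]
  ring

lemma isInternal_grading {α : A →+* A[T;T⁻¹]} (hα : IsMultiplicativeCoaction A α) :
    DirectSum.IsInternal (grading α) := by
  classical
  constructor
  · rw [injective_iff_map_eq_zero]
    intro x hx
    have hsum : (DirectSum.coeAddMonoidHom (grading α)) x =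
        ∑ i ∈ DFinsupp.support x, ((x i : A)) := by
      conv_lhs => rw [← DirectSum.sum_support_of x]
      rw [map_sum]
      exact Finset.sum_congr rfl fun i _ => DirectSum.coeAddMonoidHom_of _ _ _
    rw [hsum] at hx
    have h0 : α (∑ i ∈ DFinsupp.support x, ((x i : A))) = 0 := by rw [hx, map_zero]
    rw [map_sum] at h0
    have h0' : (∑ i ∈ DFinsupp.support x, AddMonoidAlgebra.single i ((x i : A))) = 0 := by
      rw [← h0]
      exact Finset.sum_congr rfl fun i _ => by
        rw [(x i).2, single_eq_C_mul_T]
    refine DFinsupp.ext fun j => ?_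
    have := congrArg (fun f : A[T;T⁻¹] => f.coeff j) h0'
    simp only [AddMonoidAlgebra.coeff_sum, AddMonoidAlgebra.coeff_single,
      AddMonoidAlgebra.coeff_zero, Finsupp.coe_zero, Pi.zero_apply] at this
    rw [finset_sum_single_apply _ _ j (fun h => by
      rw [DFinsupp.notMem_support_iff.mp h, ZeroMemClass.coe_zero])] at this
    exact Subtype.ext this
  · intro a
    refine ⟨∑ k ∈ (α a).coeff.support, DirectSum.of (fun i => grading α i) k
      ⟨(α a).coeff k, coassoc_coeff hα a k⟩, ?_⟩
    rw [map_sum]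
    have : ∀ k ∈ (α a).coeff.support,
        (DirectSum.coeAddMonoidHom (grading α)) (DirectSum.of (fun i => grading α i) k
          ⟨(α a).coeff k, coassoc_coeff hα a k⟩) = (α a).coeff k := fun k _ =>
      DirectSum.coeAddMonoidHom_of _ _ _
    rw [Finset.sum_congr rfl this]
    exact counit_sum hα a

lemma coaction_ext {α β : A →+* A[T;T⁻¹]} (hα : IsMultiplicativeCoaction A α)
    (hβ : IsMultiplicativeCoaction A β) (h : grading α = grading β) : α = β := by
  refine RingHom.ext fun a => ?_
  have hmem : ∀ k : ℤ, ((α a).coeff k) ∈ grading β k := fun k => h ▸ coassoc_coeff hα a k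
  have h1 : β a = ∑ k ∈ (α a).coeff.support, AddMonoidAlgebra.single k ((α a).coeff k) := by
    conv_lhs => rw [← counit_sum hα a]
    rw [Finsupp.sum, map_sum]
    exact Finset.sum_congr rfl fun k _ => by
      rw [mem_grading_iff.mp (hmem k), single_eq_C_mul_T]
  have h2 : α a = ∑ k ∈ (α a).coeff.support, AddMonoidAlgebra.single k ((α a).coeff k) :=
    (AddMonoidAlgebra.sum_coeff_single (α a)).symm
  rw [h1]; exact h2

section Construct

variable (𝒜 : ℤ → AddSubgroup A) [SetLike.GradedMonoid 𝒜] [DirectSum.Decomposition 𝒜]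

local instance : GradedRing 𝒜 := { ‹SetLike.GradedMonoid 𝒜›, ‹DirectSum.Decomposition 𝒜› with }

/-- the coaction associated to a grading -/
noncomputable def gradingToCoaction : A →+* A[T;T⁻¹] :=
  (DirectSum.toSemiring (fun i => (AddMonoidAlgebra.singleAddHom i).comp (𝒜 i).subtype)
    (by
      simp only [AddMonoidHom.coe_comp, Function.comp_apply, AddSubgroup.coe_subtype,
        AddMonoidAlgebra.singleAddHom_apply, SetLike.coe_gOne]
      exact AddMonoidAlgebra.one_def.symm)
    (by
      intro i j ai aj
      simp only [AddMonoidHom.coe_comp, Function.comp_apply, AddSubgroup.coe_subtype,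
        AddMonoidAlgebra.singleAddHom_apply, SetLike.coe_gMul]
      exact (AddMonoidAlgebra.single_mul_single ..).symm)).comp
    (DirectSum.decomposeRingEquiv 𝒜 : A ≃+* ⨁ i, 𝒜 i).toRingHom

lemma gradingToCoaction_of_mem {i : ℤ} {a : A} (ha : a ∈ 𝒜 i) :
    gradingToCoaction 𝒜 a = AddMonoidAlgebra.single i a := by
  rw [gradingToCoaction, RingHom.comp_apply]
  have : (DirectSum.decomposeRingEquiv 𝒜 : A ≃+* ⨁ i, 𝒜 i).toRingHom a
      = DirectSum.of (fun i => 𝒜 i) i ⟨a, ha⟩ := DirectSum.decompose_of_mem 𝒜 ha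
  rw [this, DirectSum.toSemiring_of]
  rfl

lemma gradingToCoaction_eq_sum [∀ (i : ℤ) (x : 𝒜 i), Decidable (x ≠ 0)] (a : A) :
    gradingToCoaction 𝒜 a =
      ∑ i ∈ (DirectSum.decompose 𝒜 a).support,
        AddMonoidAlgebra.single i ((DirectSum.decompose 𝒜 a i : A)) := by
  rw [gradingToCoaction, RingHom.comp_apply]
  have : (DirectSum.decomposeRingEquiv 𝒜 : A ≃+* ⨁ i, 𝒜 i).toRingHom a
      = DirectSum.decompose 𝒜 a := rfl
  rw [this]
  conv_lhs => rw [← DirectSum.sum_support_of (DirectSum.decompose 𝒜 a)]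
  rw [map_sum]
  exact Finset.sum_congr rfl fun i _ => by rw [DirectSum.toSemiring_of]; rfl

lemma gradingToCoaction_coeff (a : A) (j : ℤ) :
    (gradingToCoaction 𝒜 a).coeff j = (DirectSum.decompose 𝒜 a j : A) := by
  classical
  rw [gradingToCoaction_eq_sum, AddMonoidAlgebra.coeff_sum]
  simp only [AddMonoidAlgebra.coeff_single]
  exact finset_sum_single_apply _ _ j fun h => by
    rw [DFinsupp.notMem_support_iff.mp h, ZeroMemClass.coe_zero]

lemma gradingToCoaction_isCoaction : IsMultiplicativeCoaction A (gradingToCoaction 𝒜) := by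
  classical
  constructor
  · intro a
    rw [gradingToCoaction_eq_sum, map_sum]
    have : ∀ i ∈ (DirectSum.decompose 𝒜 a).support,
        (AddMonoidAlgebra.lift A A ℤ 1) (AddMonoidAlgebra.single i ((DirectSum.decompose 𝒜 a i : A)))
          = (DirectSum.decompose 𝒜 a i : A) := by
      intro i _
      rw [show (AddMonoidAlgebra.single i ((DirectSum.decompose 𝒜 a i : A)) : A[T;T⁻¹])
        = AddMonoidAlgebra.single i ((DirectSum.decompose 𝒜 a i : A)) from rfl,
        AddMonoidAlgebra.lift_single]
      simp
    rw [Finset.sum_congr rfl this]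
    exact DirectSum.sum_support_decompose 𝒜 a
  · refine RingHom.ext fun a => ?_
    simp only [RingHom.comp_apply]
    conv_lhs => rw [← DirectSum.sum_support_decompose 𝒜 a]
    conv_rhs => rw [← DirectSum.sum_support_decompose 𝒜 a]
    simp only [map_sum]
    refine Finset.sum_congr rfl fun i _ => ?_
    rw [gradingToCoaction_of_mem 𝒜 (DirectSum.decompose 𝒜 a i).2, liftL_single, liftR_single,
      gradingToCoaction_of_mem 𝒜 (DirectSum.decompose 𝒜 a i).2, ← single_eq_C_mul_T]

lemma grading_gradingToCoaction : grading (gradingToCoaction 𝒜) = 𝒜 := by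
  classical
  funext k
  ext a
  rw [mem_grading_iff]
  constructor
  · intro h
    have : (gradingToCoaction 𝒜 a).coeff k = a := by
      rw [h, ← single_eq_C_mul_T, AddMonoidAlgebra.coeff_single, Finsupp.single_eq_same]
    rw [gradingToCoaction_coeff] at this
    exact this ▸ (DirectSum.decompose 𝒜 a k).2
  · intro h
    rw [gradingToCoaction_of_mem 𝒜 h, single_eq_C_mul_T]

end Construct

end GradCoact

/-- Gradings of a commutative ring `A` by ℤ correspond bijectively to coactions of the
multiplicative group, i.e. to ring maps `α : A → A[T;T⁻¹]` satisfying the counit and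
coassociativity conditions; the correspondence sends `α` to the grading with
`A_k = {a : A | α a = a·Tᵏ}`. -/
theorem gradings_biject_with_coactions (A : Type*) [CommRing A] :
    ∃ E : {α : A →+* A[T;T⁻¹] // IsMultiplicativeCoaction A α} ≃
        {𝒜 : ℤ → AddSubgroup A //
          DirectSum.IsInternal 𝒜 ∧ (1 : A) ∈ 𝒜 0 ∧
          ∀ (j k : ℤ), ∀ a ∈ 𝒜 j, ∀ b ∈ 𝒜 k, a * b ∈ 𝒜 (j + k)},
      ∀ (α : {α : A →+* A[T;T⁻¹] // IsMultiplicativeCoaction A α}) (k : ℤ),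
        ((E α).1 k : Set A) =
          {a : A | α.1 a = LaurentPolynomial.C a * T k} := by
  classical
  refine ⟨Equiv.ofBijective
    (fun α => ⟨GradCoact.grading α.1,
      GradCoact.isInternal_grading α.2, GradCoact.one_mem_grading,
      fun j k a ha b hb => GradCoact.mul_mem_grading ha hb⟩) ⟨?_, ?_⟩,
    fun α k => rfl⟩
  · rintro ⟨α, hα⟩ ⟨β, hβ⟩ hEq
    exact Subtype.ext (GradCoact.coaction_ext hα hβ (congrArg Subtype.val hEq))
  · rintro ⟨𝒜, hint, h1, hm⟩
    letI : SetLike.GradedMonoid 𝒜 :=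
      { one_mem := h1, mul_mem := fun {i j gi gj} hi hj => hm i j gi hi gj hj }
    letI : DirectSum.Decomposition 𝒜 := hint.chooseDecomposition
    exact ⟨⟨GradCoact.gradingToCoaction 𝒜, GradCoact.gradingToCoaction_isCoaction 𝒜⟩,
      Subtype.ext (GradCoact.grading_gradingToCoaction 𝒜)⟩
end
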